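/- (Theorem 4.4) Let M = M(S) be a multiplex of an undirected graph G = (V,E) generated by a simplex S = (V_S,E_S), and suppose F_M is a partition of M̃ each of whose blocks is a maximal strong partitive set of the induced subgraph G(M̃). Then: (ii) if rank(M) = 1, either the quotient graph G(M̃)/F_M is isomorphic to S, or G(M̃)/F_M is indecomposable and isomorphic to a subgraph G′ = (V′,E′) of G(M̃) with E′ ⊆ M; (iii) if rank(M) ≥ 2, then G(M̃)/F_M is isomorphic to S. -/

import Mathlib

open Set

namespace TransOrient

variable {V : Type*}

/-- `E` is the edge set of an undirected graph on the vertex type `V`: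
an irreflexive and symmetric relation, given as a set of ordered pairs. -/
def IsGraph (E : Set (V × V)) : Prop :=
  (∀ a : V, (a, a) ∉ E) ∧ (∀ a b : V, (a, b) ∈ E ↔ (b, a) ∈ E)

/-- The forcing relation `Γ` on directed edges:
`(a,b) Γ (a',b')` iff (`a = a'` and `(b,b') ∉ E`) or (`b = b'` and `(a,a') ∉ E`). -/
def Gamma (E : Set (V × V)) (e e' : V × V) : Prop :=
  e ∈ E ∧ e' ∈ E ∧
    ((e.1 = e'.1 ∧ (e.2, e'.2) ∉ E) ∨ (e.2 = e'.2 ∧ (e.1, e'.1) ∉ E))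

/-- The implication classes of `G = (V,E)`: equivalence classes on `E` of
the reflexive-transitive closure of `Γ`. -/
def IsImplicationClass (E : Set (V × V)) (A : Set (V × V)) : Prop :=
  ∃ e ∈ E, A = {e' | Relation.ReflTransGen (Gamma E) e e'}

/-- `A⁻¹ = {(b,a) : (a,b) ∈ A}`. -/
def inv (A : Set (V × V)) : Set (V × V) := {p | (p.2, p.1) ∈ A}

/-- The color class `Â = A ∪ A⁻¹` of an implication class `A`. -/
def hat (A : Set (V × V)) : Set (V × V) := A ∪ inv A

/-- `Ã`: the set of vertices incident to an edge of `A`. -/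
def tilde (A : Set (V × V)) : Set V := {v | ∃ w, (v, w) ∈ A ∨ (w, v) ∈ A}

/-- A transitive orientation `E'` of a symmetric edge set `F`:
`E' ⊆ F`, `E' ∩ E'⁻¹ = ∅`, `E' ∪ E'⁻¹ = F` and `E'` is transitive. -/
def IsTransOrientation (F E' : Set (V × V)) : Prop :=
  E' ⊆ F ∧ E' ∩ inv E' = ∅ ∧ E' ∪ inv E' = F ∧
    ∀ a b c : V, (a, b) ∈ E' → (b, c) ∈ E' → (a, c) ∈ E'

/-- `G` is a comparability graph if `E` admits a transitive orientation. -/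
def IsComparability (E : Set (V × V)) : Prop :=
  ∃ E' : Set (V × V), IsTransOrientation E E'

/-- `E(X)`: the set of edges of `E` with both endpoints in `X`. -/
def edgesOn (E : Set (V × V)) (X : Set V) : Set (V × V) :=
  {p ∈ E | p.1 ∈ X ∧ p.2 ∈ X}

/-- `X` is a partitive set of `G = (V,E)`. -/
def IsPartitive (E : Set (V × V)) (X : Set V) : Prop :=
  ∀ a ∈ X, ∀ b ∈ X, ∀ c ∉ X, ((a, c) ∈ E ↔ (b, c) ∈ E)

/-- `X` is a "strong" partitive set of `G = (V,E)`. -/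
def IsStrongPartitive (E : Set (V × V)) (X : Set V) : Prop :=
  IsPartitive E X ∧
    ∀ Y : Set V, IsPartitive E Y → (Y ∩ X).Nonempty → X ⊆ Y ∨ Y ⊆ X

/-- `X` is a maximal "strong" partitive set of `G = (V,E)`: a strong partitive
set different from `V` which is maximal, for inclusion, among the strong
partitive sets different from `V`. -/
def IsMaxStrongPartitive (E : Set (V × V)) (X : Set V) : Prop :=
  IsStrongPartitive E X ∧ X ≠ Set.univ ∧
    ∀ Y : Set V, IsStrongPartitive E Y → Y ≠ Set.univ → X ⊆ Y → X = Y

/-- `X` is a partitive set of the induced subgraph `G(W) = (W, E(W))`. -/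
def IsPartitiveIn (E : Set (V × V)) (W : Set V) (X : Set V) : Prop :=
  X ⊆ W ∧ ∀ a ∈ X, ∀ b ∈ X, ∀ c ∈ W \ X,
    ((a, c) ∈ edgesOn E W ↔ (b, c) ∈ edgesOn E W)

/-- `X` is a "strong" partitive set of the induced subgraph `G(W)`. -/
def IsStrongPartitiveIn (E : Set (V × V)) (W : Set V) (X : Set V) : Prop :=
  IsPartitiveIn E W X ∧
    ∀ Y : Set V, IsPartitiveIn E W Y → (Y ∩ X).Nonempty → X ⊆ Y ∨ Y ⊆ X

/-- `X` is a maximal "strong" partitive set of the induced subgraph `G(W)`. -/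
def IsMaxStrongPartitiveIn (E : Set (V × V)) (W : Set V) (X : Set V) : Prop :=
  IsStrongPartitiveIn E W X ∧ X ≠ W ∧
    ∀ Y : Set V, IsStrongPartitiveIn E W Y → Y ≠ W → X ⊆ Y → X = Y

/-- Two directed edges lie in the same color class of `G = (V,E)`. -/
def SameColor (E : Set (V × V)) (e e' : V × V) : Prop :=
  ∃ A : Set (V × V), IsImplicationClass E A ∧ e ∈ hat A ∧ e' ∈ hat A

/-- A simplex of `G = (V,E)` given by its (finite, nonempty) vertex set `VS`:
a complete induced subgraph whose edges, for distinct unordered pairs,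
lie in distinct color classes of `G`. -/
def IsSimplex (E : Set (V × V)) (VS : Set V) : Prop :=
  VS.Finite ∧ VS.Nonempty ∧
    (∀ a ∈ VS, ∀ b ∈ VS, a ≠ b → (a, b) ∈ E) ∧
    (∀ a ∈ VS, ∀ b ∈ VS, ∀ c ∈ VS, ∀ d ∈ VS, a ≠ b → c ≠ d →
      SameColor E (a, b) (c, d) → (a = c ∧ b = d) ∨ (a = d ∧ b = c))

/-- The rank of a simplex on `r+1` vertices is `r`. -/
noncomputable def simplexRank (VS : Set V) : ℕ := VS.ncard - 1

/-- A maximal simplex: its vertex set is not properly contained in the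
vertex set of another simplex. -/
def IsMaxSimplex (E : Set (V × V)) (VS : Set V) : Prop :=
  IsSimplex E VS ∧ ∀ VS' : Set V, IsSimplex E VS' → VS ⊆ VS' → VS = VS'

/-- The multiplex `M(S)` generated by a simplex with vertex set `VS`:
the union of all color classes of `G` containing an edge of the simplex. -/
def multiplex (E : Set (V × V)) (VS : Set V) : Set (V × V) :=
  {e | ∃ A : Set (V × V), IsImplicationClass E A ∧ e ∈ hat A ∧
    ∃ a ∈ VS, ∃ b ∈ VS, a ≠ b ∧ (a, b) ∈ hat A}

/-- A maximal multiplex of `G`: a multiplex generated by a maximal simplex. -/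
def IsMaxMultiplex (E : Set (V × V)) (M : Set (V × V)) : Prop :=
  ∃ VS : Set V, IsMaxSimplex E VS ∧ M = multiplex E VS

/-- `P` is a partition of the set `W`. -/
def IsPartitionOf (W : Set V) (P : Set (Set V)) : Prop :=
  (∀ X ∈ P, X.Nonempty) ∧ ⋃₀ P = W ∧
    ∀ X ∈ P, ∀ Y ∈ P, X ≠ Y → X ∩ Y = ∅

/-- Adjacency in the quotient of the induced subgraph `G(W)` by a partition:
two distinct blocks are adjacent iff some pair of representatives is an
edge of `E(W)`. -/
def quotAdj (E : Set (V × V)) (W : Set V) (X Y : Set V) : Prop :=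
  X ≠ Y ∧ ∃ x ∈ X, ∃ y ∈ Y, (x, y) ∈ edgesOn E W

/-- A partitive set of an abstract graph with vertex set `W` and adjacency
relation `Adj`. -/
def IsPartitiveGen {α : Type*} (W : Set α) (Adj : α → α → Prop) (X : Set α) : Prop :=
  X ⊆ W ∧ ∀ a ∈ X, ∀ b ∈ X, ∀ c ∈ W \ X, (Adj a c ↔ Adj b c)

/-- An abstract graph `(W, Adj)` is indecomposable if all its partitive
sets are trivial. -/
def IndecomposableGen {α : Type*} (W : Set α) (Adj : α → α → Prop) : Prop :=
  ∀ X : Set α, IsPartitiveGen W Adj X → X.Subsingleton ∨ X = W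

/-- An isomorphism between the graphs `(Vα, Aα)` and `(Vβ, Aβ)`:
a bijection of the vertex sets preserving adjacency in both directions. -/
def GraphIso {α β : Type*} (Vα : Set α) (Aα : α → α → Prop)
    (Vβ : Set β) (Aβ : β → β → Prop) : Prop :=
  ∃ f : α → β, Set.BijOn f Vα Vβ ∧
    ∀ a ∈ Vα, ∀ b ∈ Vα, (Aα a b ↔ Aβ (f a) (f b))

/-- `(V', E')` is a subgraph of the induced subgraph `G(W)` of `G = (V,E)`. -/
def IsSubgraphOf (E : Set (V × V)) (W : Set V) (V' : Set V) (E' : Set (V × V)) : Prop :=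
  V' ⊆ W ∧ E' ⊆ edgesOn E W ∧ (∀ e ∈ E', e.1 ∈ V' ∧ e.2 ∈ V') ∧
    (∀ a b : V, (a, b) ∈ E' ↔ (b, a) ∈ E')

end TransOrient
namespace TransOrient

set_option linter.unusedSectionVars false
set_option maxHeartbeats 1000000

open Relation

variable {α : Type*}

section General

variable {E : Set (α × α)} (hG : IsGraph E)

include hG

/-- The implication class generated by a directed edge. -/
def CL (E : Set (α × α)) (e : α × α) : Set (α × α) :=
  {e' | Relation.ReflTransGen (Gamma E) e e'}

lemma gamma_symm : Symmetric (Gamma E) := by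
  rintro e e' ⟨he, he', h⟩
  refine ⟨he', he, ?_⟩
  rcases h with ⟨h1, h2⟩ | ⟨h1, h2⟩
  · exact Or.inl ⟨h1.symm, fun hc => h2 ((hG.2 _ _).1 hc)⟩
  · exact Or.inr ⟨h1.symm, fun hc => h2 ((hG.2 _ _).1 hc)⟩

lemma rtg_symm : Symmetric (Relation.ReflTransGen (Gamma E)) :=
  fun _ _ h => by
    haveI : Std.Symm (Gamma E) := ⟨fun _ _ h' => gamma_symm hG h'⟩
    exact symm h

lemma mem_CL_self (e : α × α) : e ∈ CL E e := ReflTransGen.refl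

lemma CL_sub_E {e : α × α} (he : e ∈ E) : CL E e ⊆ E := by
  intro f hf
  induction hf with
  | refl => exact he
  | tail _ h ih => exact h.2.1

lemma CL_eq_of_mem {e f : α × α} (hf : f ∈ CL E e) : CL E f = CL E e := by
  ext g
  constructor
  · intro hg; exact hf.trans hg
  · intro hg; exact (rtg_symm hG hf).trans hg

lemma CL_isImplClass {e : α × α} (he : e ∈ E) : IsImplicationClass E (CL E e) :=
  ⟨e, he, rfl⟩

lemma implClass_eq_CL {A : Set (α × α)} (hA : IsImplicationClass E A)
    {f : α × α} (hf : f ∈ A) : A = CL E f := by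
  obtain ⟨e, he, rfl⟩ := hA
  exact (CL_eq_of_mem hG hf).symm

/-- swapping both edges preserves Γ. -/
lemma gamma_swap {e e' : α × α} (h : Gamma E e e') :
    Gamma E (e.2, e.1) (e'.2, e'.1) := by
  obtain ⟨he, he', hor⟩ := h
  refine ⟨(hG.2 _ _).1 he, (hG.2 _ _).1 he', ?_⟩
  rcases hor with ⟨h1, h2⟩ | ⟨h1, h2⟩
  · exact Or.inr ⟨h1, h2⟩
  · exact Or.inl ⟨h1, h2⟩

lemma CL_swap'' {e f : α × α} (h : f ∈ CL E e) :
    (f.2, f.1) ∈ CL E (e.2, e.1) := by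
  induction h with
  | refl => exact ReflTransGen.refl
  | @tail f g _ h2 ih => exact ih.tail (gamma_swap hG h2)

lemma CL_swap {a b x y : α} (h : (x, y) ∈ CL E (a, b)) :
    (y, x) ∈ CL E (b, a) := CL_swap'' hG h

lemma mem_hat_iff {A : Set (α × α)} {x y : α} :
    (x, y) ∈ hat A ↔ (x, y) ∈ A ∨ (y, x) ∈ A := Iff.rfl

lemma hat_symm {A : Set (α × α)} {x y : α} (h : (x, y) ∈ hat A) :
    (y, x) ∈ hat A := by
  rcases h with h | h
  · exact Or.inr h
  · exact Or.inl h

lemma hat_CL_sub_E {e : α × α} (he : e ∈ E) : hat (CL E e) ⊆ E := by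
  rintro ⟨x, y⟩ (h | h)
  · exact CL_sub_E hG he h
  · exact (hG.2 _ _).1 (CL_sub_E hG he h)

lemma mem_hat_CL_swap {a b x y : α} (h : (x, y) ∈ hat (CL E (a, b))) :
    (x, y) ∈ hat (CL E (b, a)) := by
  rcases h with h | h
  · exact Or.inr (CL_swap hG h)
  · exact Or.inl (CL_swap hG h)

lemma hat_CL_comm {a b : α} : hat (CL E (a, b)) = hat (CL E (b, a)) := by
  ext ⟨x, y⟩
  exact ⟨fun h => mem_hat_CL_swap hG h, fun h => mem_hat_CL_swap hG h⟩

omit hG in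
lemma tilde_hat {A : Set (α × α)} : tilde (hat A) = tilde A := by
  ext v
  constructor
  · rintro ⟨w, h | h⟩
    · rcases h with h | h
      · exact ⟨w, Or.inl h⟩
      · exact ⟨w, Or.inr h⟩
    · rcases h with h | h
      · exact ⟨w, Or.inr h⟩
      · exact ⟨w, Or.inl h⟩
  · rintro ⟨w, h | h⟩
    · exact ⟨w, Or.inl (Or.inl h)⟩
    · exact ⟨w, Or.inr (Or.inl h)⟩

lemma tilde_CL_comm {a b : α} : tilde (CL E (a, b)) = tilde (CL E (b, a)) := by
  ext v
  constructor
  · rintro ⟨w, h | h⟩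
    · exact ⟨_, Or.inr (CL_swap hG h)⟩
    · exact ⟨_, Or.inl (CL_swap hG h)⟩
  · rintro ⟨w, h | h⟩
    · exact ⟨_, Or.inr (CL_swap hG h)⟩
    · exact ⟨_, Or.inl (CL_swap hG h)⟩

/-- the key one-step closure: if `(x,y)` is in a color class, `(y,y') ∉ E`
and `(x,y') ∈ E`, then `(x,y')` is in the same color class. -/
lemma hat_step_right {e : α × α} (he : e ∈ E) {x y y' : α}
    (h : (x, y) ∈ hat (CL E e)) (h1 : (y, y') ∉ E) (h2 : (x, y') ∈ E) :
    (x, y') ∈ hat (CL E e) := by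
  rcases h with h | h
  · exact Or.inl (h.tail ⟨CL_sub_E hG he h, h2, Or.inl ⟨rfl, h1⟩⟩)
  · refine Or.inr (h.tail ?_)
    exact ⟨CL_sub_E hG he h, (hG.2 _ _).1 h2, Or.inr ⟨rfl, h1⟩⟩

lemma hat_step_left {e : α × α} (he : e ∈ E) {x x' y : α}
    (h : (x, y) ∈ hat (CL E e)) (h1 : (x, x') ∉ E) (h2 : (x', y) ∈ E) :
    (x', y) ∈ hat (CL E e) := by
  have := hat_step_right hG he (hat_symm hG h) h1 ((hG.2 _ _).1 h2)
  exact hat_symm hG this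

/-- absorption: a partitive set of `G(W)` containing both endpoints of an edge
of an implication class whose support lies in `W` contains the whole class. -/
lemma absorb {W X : Set α} (hX : IsPartitiveIn E W X) {p q : α}
    (he : (p, q) ∈ E) (ht : tilde (CL E (p, q)) ⊆ W)
    (h1 : p ∈ X) (h2 : q ∈ X) :
    ∀ f ∈ CL E (p, q), f.1 ∈ X ∧ f.2 ∈ X := by
  intro f hf
  induction hf with
  | refl => exact ⟨h1, h2⟩
  | @tail f g hf hfg ih =>
      obtain ⟨f1, f2⟩ := f
      obtain ⟨g1, g2⟩ := g
      have hgC : (g1, g2) ∈ CL E (p, q) := hf.tail hfg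
      have hgE : (g1, g2) ∈ E := hfg.2.1
      have hg1W : g1 ∈ W := ht ⟨g2, Or.inl hgC⟩
      have hg2W : g2 ∈ W := ht ⟨g1, Or.inr hgC⟩
      rcases hfg.2.2 with ⟨heq, hne⟩ | ⟨heq, hne⟩
      · simp only at heq hne ih ⊢
        subst heq
        refine ⟨ih.1, ?_⟩
        by_contra hg2
        have hpart := hX.2 f1 ih.1 f2 ih.2 g2 ⟨hg2W, hg2⟩
        have hmem : (f1, g2) ∈ edgesOn E W := ⟨hgE, hX.1 ih.1, hg2W⟩
        exact hne (hpart.1 hmem).1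
      · simp only at heq hne ih ⊢
        subst heq
        refine ⟨?_, ih.2⟩
        by_contra hg1
        have hpart := hX.2 f2 ih.2 f1 ih.1 g1 ⟨hg1W, hg1⟩
        have hmem : (f2, g1) ∈ edgesOn E W := ⟨(hG.2 _ _).1 hgE, hX.1 ih.2, hg1W⟩
        exact hne (hpart.1 hmem).1

lemma absorb_tilde {W X : Set α} (hX : IsPartitiveIn E W X) {p q : α}
    (he : (p, q) ∈ E) (ht : tilde (CL E (p, q)) ⊆ W)
    (h1 : p ∈ X) (h2 : q ∈ X) :
    tilde (CL E (p, q)) ⊆ X := by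
  rintro v ⟨w, h | h⟩
  · exact (absorb hG hX he ht h1 h2 _ h).1
  · exact (absorb hG hX he ht h1 h2 _ h).2

/-- The Triangle Lemma. -/
lemma triangle {a b0 c0 : α} (hbc : (b0, c0) ∈ E) (hab : (a, b0) ∈ E)
    (hac : (a, c0) ∈ E)
    (hAB : hat (CL E (b0, c0)) ≠ hat (CL E (a, b0)))
    (hAC : hat (CL E (b0, c0)) ≠ hat (CL E (a, c0))) :
    ∀ f ∈ CL E (b0, c0), (a, f.1) ∈ CL E (a, b0) ∧ (a, f.2) ∈ CL E (a, c0) := by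
  intro f hf
  induction hf with
  | refl => exact ⟨ReflTransGen.refl, ReflTransGen.refl⟩
  | @tail f g hf hfg ih =>
      obtain ⟨f1, f2⟩ := f
      obtain ⟨g1, g2⟩ := g
      have hgC : (g1, g2) ∈ CL E (b0, c0) := hf.tail hfg
      have hgE : (g1, g2) ∈ E := hfg.2.1
      rcases hfg.2.2 with ⟨heq, hne⟩ | ⟨heq, hne⟩
      · simp only at heq hne ih ⊢
        subst heq
        have haf1 : (a, f1) ∈ CL E (a, b0) := ih.1
        have hag2 : (a, g2) ∈ E := by
          by_contra hnac
          have hf1a : (f1, a) ∈ CL E (b0, a) := CL_swap hG haf1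
          have hg' : (f1, g2) ∈ CL E (b0, a) :=
            hf1a.tail ⟨CL_sub_E hG ((hG.2 _ _).1 hab) hf1a, hgE, Or.inl ⟨rfl, hnac⟩⟩
          have e1 : CL E (b0, c0) = CL E (b0, a) := by
            rw [← CL_eq_of_mem hG hgC, ← CL_eq_of_mem hG hg']
          apply hAB
          rw [e1, hat_CL_comm hG, implClass_eq_CL hG (CL_isImplClass hG hab) haf1]
        exact ⟨ih.1, ih.2.tail ⟨CL_sub_E hG hac ih.2, hag2, Or.inl ⟨rfl, hne⟩⟩⟩
      · simp only at heq hne ih ⊢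
        subst heq
        have haf2 : (a, f2) ∈ CL E (a, c0) := ih.2
        have hag1 : (a, g1) ∈ E := by
          by_contra hnab
          have hg' : (g1, f2) ∈ CL E (a, c0) :=
            haf2.tail ⟨CL_sub_E hG hac haf2, hgE, Or.inr ⟨rfl, hnab⟩⟩
          have e1 : CL E (b0, c0) = CL E (a, c0) := by
            rw [← CL_eq_of_mem hG hgC, ← CL_eq_of_mem hG hg']
          exact hAC (by rw [e1])
        exact ⟨ih.1.tail ⟨CL_sub_E hG hab ih.1, hag1, Or.inl ⟨rfl, hne⟩⟩, ih.2⟩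

/-- adjacency to a vertex outside `tilde A` is constant along an edge of `A`. -/
lemma tilde_adj_edge {p q : α} (he : (p, q) ∈ E) {v : α}
    (hv : v ∉ tilde (CL E (p, q))) {f : α × α} (hf : f ∈ CL E (p, q)) :
    ((f.1, v) ∈ E ↔ (f.2, v) ∈ E) := by
  obtain ⟨f1, f2⟩ := f
  simp only
  constructor
  · intro h1
    by_contra h2
    have : (f1, v) ∈ CL E (p, q) := by
      rw [← CL_eq_of_mem hG hf]
      exact ReflTransGen.single ⟨CL_sub_E hG he hf, h1, Or.inl ⟨rfl, h2⟩⟩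
    exact hv ⟨f1, Or.inr this⟩
  · intro h2
    by_contra h1
    have hswap : (f2, f1) ∈ CL E (q, p) := CL_swap hG hf
    have hmem : (f2, v) ∈ CL E (q, p) := by
      rw [← CL_eq_of_mem hG hswap]
      exact ReflTransGen.single ⟨CL_sub_E hG ((hG.2 _ _).1 he) hswap, h2, Or.inl ⟨rfl, h1⟩⟩
    have : v ∈ tilde (CL E (q, p)) := ⟨f2, Or.inr hmem⟩
    rw [tilde_CL_comm hG] at this
    exact hv this

/-- `tilde A` behaves like a module: vertices outside are adjacent to all of
`tilde A` or none of it. -/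
lemma tilde_module {p q : α} (he : (p, q) ∈ E) {v : α}
    (hv : v ∉ tilde (CL E (p, q))) {u u' : α}
    (hu : u ∈ tilde (CL E (p, q))) (hu' : u' ∈ tilde (CL E (p, q))) :
    ((u, v) ∈ E ↔ (u', v) ∈ E) := by
  have key : ∀ f ∈ CL E (p, q), ((f.1, v) ∈ E ↔ (p, v) ∈ E) ∧
      ((f.2, v) ∈ E ↔ (p, v) ∈ E) := by
    intro f hf
    induction hf with
    | refl =>
        exact ⟨Iff.rfl, (tilde_adj_edge hG he hv (ReflTransGen.refl)).symm⟩
    | @tail f g hf hfg ih =>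
        have hgC : g ∈ CL E (p, q) := hf.tail hfg
        have hedge := tilde_adj_edge hG he hv hgC
        obtain ⟨f1, f2⟩ := f
        obtain ⟨g1, g2⟩ := g
        simp only at hedge ih ⊢
        rcases hfg.2.2 with ⟨heq, _⟩ | ⟨heq, _⟩
        · simp only at heq
          subst heq
          exact ⟨ih.1, hedge.symm.trans ih.1⟩
        · simp only at heq
          subst heq
          exact ⟨hedge.trans ih.2, ih.2⟩
  have huv : ((u, v) ∈ E ↔ (p, v) ∈ E) := by
    obtain ⟨w, h | h⟩ := hu
    · exact (key _ h).1
    · exact (key _ h).2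
  have hu'v : ((u', v) ∈ E ↔ (p, v) ∈ E) := by
    obtain ⟨w, h | h⟩ := hu'
    · exact (key _ h).1
    · exact (key _ h).2
  exact huv.trans hu'v.symm


/-! ### co-components -/

/-- non-adjacency within `W`. -/
def NE (E : Set (α × α)) (W : Set α) (x y : α) : Prop :=
  x ∈ W ∧ y ∈ W ∧ (x, y) ∉ E

/-- co-reachability within `W`. -/
def CoReach (E : Set (α × α)) (W : Set α) : α → α → Prop :=
  Relation.ReflTransGen (NE E W)

omit hG in
lemma coReach_mem {W : Set α} {v y : α} (hv : v ∈ W) (h : CoReach E W v y) :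
    y ∈ W := by
  induction h with
  | refl => exact hv
  | tail _ h2 _ => exact h2.2.1

lemma coReach_symm {W : Set α} : Symmetric (CoReach E W) := by
  have : Symmetric (NE E W) := by
    rintro x y ⟨h1, h2, h3⟩
    exact ⟨h2, h1, fun hc => h3 ((hG.2 _ _).1 hc)⟩
  haveI : Std.Symm (NE E W) := ⟨fun _ _ h' => this h'⟩
  exact fun _ _ h => (show ReflTransGen (NE E W) _ _ from symm (show ReflTransGen (NE E W) _ _ from h))

omit hG in
lemma coReach_trans {W : Set α} {x y z : α} (h1 : CoReach E W x y)
    (h2 : CoReach E W y z) : CoReach E W x z := h1.trans h2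

/-- the co-component of `v` in `G(W)`. -/
def coComp (E : Set (α × α)) (W : Set α) (v : α) : Set α :=
  {y | CoReach E W v y}

omit hG in
lemma mem_coComp_self {W : Set α} (v : α) : v ∈ coComp E W v :=
  Relation.ReflTransGen.refl

omit hG in
lemma coComp_sub {W : Set α} {v : α} (hv : v ∈ W) : coComp E W v ⊆ W :=
  fun _ h => coReach_mem hv h

lemma adj_of_not_coReach {W : Set α} {v a c : α} (hv : v ∈ W)
    (ha : a ∈ coComp E W v) (hc : c ∈ W) (hnc : c ∉ coComp E W v) :
    (a, c) ∈ E := by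
  by_contra hne
  exact hnc (coReach_trans ha (Relation.ReflTransGen.single
    ⟨coReach_mem hv ha, hc, hne⟩))

lemma coComp_partitive {W : Set α} {v : α} (hv : v ∈ W) :
    IsPartitiveIn E W (coComp E W v) := by
  refine ⟨coComp_sub hv, ?_⟩
  intro a ha b hb c hc
  have h1 : (a, c) ∈ E := adj_of_not_coReach hG hv ha hc.1 hc.2
  have h2 : (b, c) ∈ E := adj_of_not_coReach hG hv hb hc.1 hc.2
  constructor
  · intro _; exact ⟨h2, coReach_mem hv hb, hc.1⟩
  · intro _; exact ⟨h1, coReach_mem hv ha, hc.1⟩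

/-- exit lemma: a partitive set meeting a co-component is contained in it,
unless it contains it. -/
lemma partitive_vs_coComp {W Y : Set α} (hY : IsPartitiveIn E W Y) {v : α}
    (hv : v ∈ W) (hmeet : (Y ∩ coComp E W v).Nonempty)
    (hnsub : ¬ coComp E W v ⊆ Y) : Y ⊆ coComp E W v := by
  obtain ⟨y0, hy0Y, hy0C⟩ := hmeet
  rw [Set.not_subset] at hnsub
  obtain ⟨c, hcC, hcY⟩ := hnsub
  have hchain : CoReach E W y0 c := coReach_trans (coReach_symm hG hy0C) hcC
  have key : ∀ z, CoReach E W y0 z → z ∈ Y ∨ Y ⊆ coComp E W v := by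
    intro z hz
    induction hz with
    | refl => exact Or.inl hy0Y
    | @tail z z' hz hstep ih =>
        rcases ih with hzY | hsub
        · by_cases hz'Y : z' ∈ Y
          · exact Or.inl hz'Y
          · right
            intro x hx
            have hxz' : (x, z') ∉ E := by
              intro hadj
              have := (hY.2 x hx z hzY z' ⟨hstep.2.1, hz'Y⟩).1
                ⟨hadj, hY.1 hx, hstep.2.1⟩
              exact hstep.2.2 this.1
            have hz'C : z' ∈ coComp E W v :=
              coReach_trans hy0C (hz.tail hstep)
            exact coReach_trans hz'C
              (Relation.ReflTransGen.single ⟨hstep.2.1, hY.1 hx, fun hc =>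
                hxz' ((hG.2 _ _).1 hc)⟩)
        · exact Or.inr hsub
  rcases key c hchain with h | h
  · exact absurd h hcY
  · exact h

lemma coComp_strong {W : Set α} {v : α} (hv : v ∈ W) :
    IsStrongPartitiveIn E W (coComp E W v) := by
  refine ⟨coComp_partitive hG hv, ?_⟩
  intro Y hY hne
  by_cases hsub : coComp E W v ⊆ Y
  · exact Or.inl hsub
  · exact Or.inr (partitive_vs_coComp hG hY hv hne hsub)

end General

end TransOrient
namespace TransOrient

set_option linter.unusedSectionVars false
set_option maxHeartbeats 1000000

open Relation

section SimplexFacts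

variable {V : Type*} {E : Set (V × V)} (hG : IsGraph E)
  {VS : Set V} (hS : IsSimplex E VS)

include hG hS

omit hG in
lemma vs_edge {s t : V} (hs : s ∈ VS) (ht : t ∈ VS) (hst : s ≠ t) :
    (s, t) ∈ E := hS.2.2.1 s hs t ht hst

/-- distinct simplex pairs have distinct colors. -/
lemma color_distinct {s t u v : V} (hs : s ∈ VS) (ht : t ∈ VS)
    (hu : u ∈ VS) (hv : v ∈ VS) (hst : s ≠ t) (huv : u ≠ v)
    (hmem : (u, v) ∈ hat (CL E (s, t)))
    (hne : ¬ ((s = u ∧ t = v) ∨ (s = v ∧ t = u))) : False := by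
  have hsc : SameColor E (s, t) (u, v) :=
    ⟨CL E (s, t), CL_isImplClass hG (vs_edge hS hs ht hst),
      Or.inl (ReflTransGen.refl), hmem⟩
  rcases hS.2.2.2 s hs t ht u hu v hv hst huv hsc with h | h
  · exact hne (Or.inl h)
  · exact hne (Or.inr ⟨h.1, h.2⟩)

lemma hat_CL_ne {s t u v : V} (hs : s ∈ VS) (ht : t ∈ VS)
    (hu : u ∈ VS) (hv : v ∈ VS) (hst : s ≠ t) (huv : u ≠ v)
    (hne : ¬ ((s = u ∧ t = v) ∨ (s = v ∧ t = u))) :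
    hat (CL E (s, t)) ≠ hat (CL E (u, v)) := by
  intro heq
  apply color_distinct hG hS hs ht hu hv hst huv _ hne
  rw [heq]
  exact Or.inl (ReflTransGen.refl)

omit hS in
lemma mem_tilde_of_hat_left {A : Set (V × V)} {x y : V}
    (h : (x, y) ∈ hat A) : x ∈ tilde A := by
  rcases h with h | h
  · exact ⟨y, Or.inl h⟩
  · exact ⟨y, Or.inr h⟩

omit hS in
lemma mem_tilde_of_hat_right {A : Set (V × V)} {x y : V}
    (h : (x, y) ∈ hat A) : y ∈ tilde A := by
  rcases h with h | h
  · exact ⟨x, Or.inr h⟩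
  · exact ⟨x, Or.inl h⟩

lemma mem_multiplex_iff {e : V × V} :
    e ∈ multiplex E VS ↔
      ∃ s ∈ VS, ∃ t ∈ VS, s ≠ t ∧ e ∈ hat (CL E (s, t)) := by
  constructor
  · rintro ⟨A, hA, heA, a, ha, b, hb, hab, habA⟩
    rcases habA with h | h
    · exact ⟨a, ha, b, hb, hab, by
        rw [← implClass_eq_CL hG hA h]; exact heA⟩
    · refine ⟨b, hb, a, ha, hab.symm, by
        rw [← implClass_eq_CL hG hA h]; exact heA⟩
  · rintro ⟨s, hs, t, ht, hst, he⟩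
    exact ⟨CL E (s, t), CL_isImplClass hG (hS.2.2.1 s hs t ht hst),
      he, s, hs, t, ht, hst, Or.inl ReflTransGen.refl⟩

lemma mem_W_iff {w : V} :
    w ∈ tilde (multiplex E VS) ↔
      ∃ s ∈ VS, ∃ t ∈ VS, s ≠ t ∧ w ∈ tilde (CL E (s, t)) := by
  constructor
  · rintro ⟨z, h | h⟩
    · obtain ⟨s, hs, t, ht, hst, hh⟩ := (mem_multiplex_iff hG hS).1 h
      exact ⟨s, hs, t, ht, hst, mem_tilde_of_hat_left hG hh⟩
    · obtain ⟨s, hs, t, ht, hst, hh⟩ := (mem_multiplex_iff hG hS).1 h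
      exact ⟨s, hs, t, ht, hst, mem_tilde_of_hat_right hG hh⟩
  · rintro ⟨s, hs, t, ht, hst, z, h | h⟩
    · exact ⟨z, Or.inl ((mem_multiplex_iff hG hS).2
        ⟨s, hs, t, ht, hst, Or.inl h⟩)⟩
    · exact ⟨z, Or.inr ((mem_multiplex_iff hG hS).2
        ⟨s, hs, t, ht, hst, Or.inl h⟩)⟩

lemma tilde_CL_sub_W {s t : V} (hs : s ∈ VS) (ht : t ∈ VS) (hst : s ≠ t) :
    tilde (CL E (s, t)) ⊆ tilde (multiplex E VS) := by
  intro w hw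
  exact (mem_W_iff hG hS).2 ⟨s, hs, t, ht, hst, hw⟩

lemma vs_sub_W {s t : V} (hs : s ∈ VS) (ht : t ∈ VS) (hst : s ≠ t) :
    s ∈ tilde (multiplex E VS) :=
  tilde_CL_sub_W hG hS hs ht hst ⟨t, Or.inl ReflTransGen.refl⟩

omit hG hS in
lemma exists_third (hfin : VS.Finite) (h3 : 3 ≤ VS.ncard) {s t : V} :
    ∃ r ∈ VS, r ≠ s ∧ r ≠ t := by
  by_contra hc
  push_neg at hc
  have hsub : VS ⊆ {s, t} := by
    intro r hr
    rcases eq_or_ne r s with h | h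
    · exact Or.inl h
    · exact Or.inr (hc r hr h)
  have := Set.ncard_le_ncard hsub ((Set.finite_singleton t).insert s)
  have h2 : ({s, t} : Set V).ncard ≤ 2 := by
    apply le_trans (Set.ncard_insert_le _ _)
    simp
  omega

/-- apex adjacency from the triangle lemma. -/
lemma apex_adj {s t r : V} (hs : s ∈ VS) (ht : t ∈ VS) (hr : r ∈ VS)
    (hst : s ≠ t) (hrs : r ≠ s) (hrt : r ≠ t) {w : V}
    (hw : w ∈ tilde (CL E (s, t))) :
    (r, w) ∈ E ∧ ((r, w) ∈ CL E (r, s) ∨ (r, w) ∈ CL E (r, t)) := by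
  have hAB : hat (CL E (s, t)) ≠ hat (CL E (r, s)) := by
    apply hat_CL_ne hG hS hs ht hr hs hst hrs
    rintro (⟨ha, hb⟩ | ⟨ha, hb⟩)
    · exact hrs ha.symm
    · exact hrt hb.symm
  have hAC : hat (CL E (s, t)) ≠ hat (CL E (r, t)) := by
    apply hat_CL_ne hG hS hs ht hr ht hst hrt
    rintro (⟨ha, hb⟩ | ⟨ha, hb⟩)
    · exact hrs ha.symm
    · exact hst ha
  have htr := triangle hG (vs_edge hS hs ht hst)
    (vs_edge hS hr hs hrs) (vs_edge hS hr ht hrt) hAB hAC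
  obtain ⟨z, h | h⟩ := hw
  · have := (htr _ h).1
    exact ⟨CL_sub_E hG (vs_edge hS hr hs hrs) this, Or.inl this⟩
  · have := (htr _ h).2
    exact ⟨CL_sub_E hG (vs_edge hS hr ht hrt) this, Or.inr this⟩

/-- a vertex of `W` misses at most one simplex vertex (rank ≥ 2). -/
lemma miss_le_one (hfin : VS.Finite) (h3 : 3 ≤ VS.ncard) {w u u' : V}
    (hw : w ∈ tilde (multiplex E VS)) (hu : u ∈ VS) (hu' : u' ∈ VS)
    (huu : u ≠ u') (hwu : w ≠ u) (hwu' : w ≠ u')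
    (h1 : (w, u) ∉ E) (h2 : (w, u') ∉ E) : False := by
  obtain ⟨p, hp, q, hq, hpq, hwpq⟩ := (mem_W_iff hG hS).1 hw
  -- u and u' must both lie in {p, q}
  have hin : ∀ x : V, x ∈ VS → x ≠ u → x ≠ u' → False → True := fun _ _ _ _ _ => trivial
  have key : ∀ x : V, x ∈ VS → (w, x) ∉ E → x = p ∨ x = q := by
    intro x hx hnadj
    by_contra hc
    push_neg at hc
    have := (apex_adj hG hS hp hq hx hpq hc.1 hc.2 hwpq).1
    exact hnadj ((hG.2 _ _).1 this)
  -- w itself is not a simplex vertex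
  have hwVS : w ∉ VS := by
    intro hwv
    rcases key u hu h1 with rfl | rfl
    · exact h1 (vs_edge hS hwv hu hwu)
    · exact h1 (vs_edge hS hwv hu hwu)
  rcases key u hu h1 with rfl | rfl
  · rcases key u' hu' h2 with rfl | rfl
    · exact huu rfl
    · -- u = p, u' = q
      obtain ⟨r, hrVS, hru, hru'⟩ := exists_third hfin h3 (s := u) (t := u')
      have hrw : (r, w) ∈ E :=
        (apex_adj hG hS hu hu' hrVS huu hru hru' hwpq).1
      have c1 : (r, w) ∈ CL E (r, u) :=
        ReflTransGen.single ⟨vs_edge hS hrVS hu hru, hrw,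
          Or.inl ⟨rfl, fun hc => h1 ((hG.2 _ _).1 hc)⟩⟩
      have c2 : (r, w) ∈ CL E (r, u') :=
        ReflTransGen.single ⟨vs_edge hS hrVS hu' hru', hrw,
          Or.inl ⟨rfl, fun hc => h2 ((hG.2 _ _).1 hc)⟩⟩
      have : CL E (r, u) = CL E (r, u') := by
        rw [← CL_eq_of_mem hG c1, ← CL_eq_of_mem hG c2]
      apply color_distinct hG hS hrVS hu hrVS hu' hru hru'
        (s := r) (t := u) (u := r) (v := u')
      · rw [this]; exact Or.inl ReflTransGen.refl
      · rintro (⟨ha, hb⟩ | ⟨ha, hb⟩)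
        · exact huu hb
        · exact hru' ha
  · rcases key u' hu' h2 with rfl | rfl
    · -- u = q, u' = p
      obtain ⟨r, hrVS, hru, hru'⟩ := exists_third hfin h3 (s := u) (t := u')
      have hw' : w ∈ tilde (CL E (u', u)) := hwpq
      have hrw : (r, w) ∈ E :=
        (apex_adj hG hS hu' hu hrVS huu.symm hru' hru hw').1
      have c1 : (r, w) ∈ CL E (r, u) :=
        ReflTransGen.single ⟨vs_edge hS hrVS hu hru, hrw,
          Or.inl ⟨rfl, fun hc => h1 ((hG.2 _ _).1 hc)⟩⟩
      have c2 : (r, w) ∈ CL E (r, u') :=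
        ReflTransGen.single ⟨vs_edge hS hrVS hu' hru', hrw,
          Or.inl ⟨rfl, fun hc => h2 ((hG.2 _ _).1 hc)⟩⟩
      have : CL E (r, u) = CL E (r, u') := by
        rw [← CL_eq_of_mem hG c1, ← CL_eq_of_mem hG c2]
      apply color_distinct hG hS hrVS hu hrVS hu' hru hru'
        (s := r) (t := u) (u := r) (v := u')
      · rw [this]; exact Or.inl ReflTransGen.refl
      · rintro (⟨ha, hb⟩ | ⟨ha, hb⟩)
        · exact huu hb
        · exact hru' ha
    · exact huu rfl

end SimplexFacts

end TransOrient
namespace TransOrient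

set_option linter.unusedSectionVars false
set_option maxHeartbeats 1000000

open Relation

section Rank2

variable {V : Type*} {E : Set (V × V)} (hG : IsGraph E)
  {VS : Set V} (hS : IsSimplex E VS)

include hG hS

/-- distinct simplex vertices are in distinct co-components (rank ≥ 2). -/
lemma simplex_not_coReach (h3 : 3 ≤ VS.ncard) {s t : V}
    (hs : s ∈ VS) (ht : t ∈ VS) (hst : s ≠ t) :
    ¬ CoReach E (tilde (multiplex E VS)) s t := by
  set W := tilde (multiplex E VS) with hW
  intro hreach
  have key : ∀ y, CoReach E W s y →
      y = s ∨ (y ∈ W ∧ y ∉ VS ∧ ∀ u ∈ VS, u ≠ s → (u, y) ∈ E ∧ (u, y) ∈ CL E (u, s)) := by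
    intro y hy
    induction hy with
    | refl => exact Or.inl rfl
    | @tail y z hy hstep ih =>
        have hzW : z ∈ W := hstep.2.1
        rcases eq_or_ne z s with rfl | hzs
        · exact Or.inl rfl
        · right
          -- first, z has no simplex non-neighbour except possibly s
          rcases ih with hys | ⟨hyW, hyVS, hy'⟩
          · -- y = s, step : NE s z
            rw [hys] at hstep
            have hsz : (s, z) ∉ E := hstep.2.2
            have hzVS : z ∉ VS := by
              intro hzv
              exact hsz (vs_edge hS hs hzv hzs.symm)
            refine ⟨hzW, hzVS, ?_⟩
            intro u hu hus
            have huz : (u, z) ∈ E := by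
              by_contra hnuz
              exact miss_le_one hG hS hS.1 h3 hzW hs hu
                (fun h => hus h.symm) hzs
                (fun h => hzVS (by rw [h]; exact hu))
                (fun hc => hsz ((hG.2 _ _).1 hc)) (fun hc => hnuz ((hG.2 _ _).1 hc))
            exact ⟨huz, ReflTransGen.single
              ⟨vs_edge hS hu hs hus, huz, Or.inl ⟨rfl, hsz⟩⟩⟩
          · -- y is a non-simplex vertex of type s
            have hyz : (y, z) ∉ E := hstep.2.2
            by_cases hzVS : z ∈ VS
            · -- z a simplex vertex ≠ s : contradiction
              exfalso
              obtain ⟨u, hu, hus, huz⟩ := exists_third hS.1 h3 (s := s) (t := z)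
              have h1 : (u, y) ∈ CL E (u, s) := (hy' u hu hus).2
              have huzE : (u, z) ∈ E := vs_edge hS hu hzVS huz
              have h2 : (u, z) ∈ CL E (u, s) :=
                h1.tail ⟨(hy' u hu hus).1, huzE, Or.inl ⟨rfl, hyz⟩⟩
              apply color_distinct hG hS hu hs hu hzVS hus huz
                (s := u) (t := s) (u := u) (v := z)
              · exact Or.inl ((CL_eq_of_mem hG h2) ▸ ReflTransGen.refl :
                  (u, z) ∈ CL E (u, s))
              · rintro (⟨ha, hb⟩ | ⟨ha, hb⟩)
                · exact hzs hb.symm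
                · exact huz ha
            · refine ⟨hzW, hzVS, ?_⟩
              -- no misses besides s
              have hnomiss : ∀ u' ∈ VS, u' ≠ s → (u', z) ∈ E := by
                intro u' hu' hu's
                by_contra hmiss
                obtain ⟨u, hu, hus, huu'⟩ := exists_third hS.1 h3 (s := s) (t := u')
                have huzE : (u, z) ∈ E := by
                  by_contra hnuz
                  exact miss_le_one hG hS hS.1 h3 hzW hu hu' huu'
                    (fun h => hzVS (h ▸ hu)) (fun h => hzVS (h ▸ hu'))
                    (fun hc => hnuz ((hG.2 _ _).1 hc))
                    (fun hc => hmiss ((hG.2 _ _).1 hc))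
                have h1 : (u, z) ∈ CL E (u, s) :=
                  ((hy' u hu hus).2).tail ⟨(hy' u hu hus).1, huzE, Or.inl ⟨rfl, hyz⟩⟩
                have h2 : (u, z) ∈ CL E (u, u') :=
                  ReflTransGen.single ⟨vs_edge hS hu hu' huu', huzE,
                    Or.inl ⟨rfl, hmiss⟩⟩
                have : CL E (u, s) = CL E (u, u') := by
                  rw [← CL_eq_of_mem hG h1, ← CL_eq_of_mem hG h2]
                apply color_distinct hG hS hu hs hu hu' hus huu'
                  (s := u) (t := s) (u := u) (v := u')
                · rw [this]; exact Or.inl ReflTransGen.refl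
                · rintro (⟨ha, hb⟩ | ⟨ha, hb⟩)
                  · exact hu's hb.symm
                  · exact huu' ha
              intro u hu hus
              have huz := hnomiss u hu hus
              exact ⟨huz, ((hy' u hu hus).2).tail
                ⟨(hy' u hu hus).1, huz, Or.inl ⟨rfl, hyz⟩⟩⟩
  rcases key t hreach with h | ⟨_, htVS, _⟩
  · exact hst h.symm
  · exact htVS ht

/-- every endpoint of an edge of `CL (p,q)` is co-reachable from `p` or `q`. -/
lemma coverage_CL {p q : V} (hp : p ∈ VS) (hq : q ∈ VS) (hpq : p ≠ q) :
    ∀ f ∈ CL E (p, q),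
      CoReach E (tilde (multiplex E VS)) p f.1 ∧
      CoReach E (tilde (multiplex E VS)) q f.2 := by
  set W := tilde (multiplex E VS) with hW
  have ht : tilde (CL E (p, q)) ⊆ W := tilde_CL_sub_W hG hS hp hq hpq
  intro f hf
  induction hf with
  | refl => exact ⟨ReflTransGen.refl, ReflTransGen.refl⟩
  | @tail f g hf hfg ih =>
      obtain ⟨f1, f2⟩ := f
      obtain ⟨g1, g2⟩ := g
      have hfC : (f1, f2) ∈ CL E (p, q) := hf
      have hgC : (g1, g2) ∈ CL E (p, q) := hf.tail hfg
      have hf1W : f1 ∈ W := ht ⟨f2, Or.inl hfC⟩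
      have hf2W : f2 ∈ W := ht ⟨f1, Or.inr hfC⟩
      have hg1W : g1 ∈ W := ht ⟨g2, Or.inl hgC⟩
      have hg2W : g2 ∈ W := ht ⟨g1, Or.inr hgC⟩
      rcases hfg.2.2 with ⟨heq, hne⟩ | ⟨heq, hne⟩
      · simp only at heq hne ih ⊢
        subst heq
        exact ⟨ih.1, ih.2.tail ⟨hf2W, hg2W, hne⟩⟩
      · simp only at heq hne ih ⊢
        subst heq
        exact ⟨ih.1.tail ⟨hf1W, hg1W, hne⟩, ih.2⟩

/-- every vertex of `W` is co-reachable from a simplex vertex. -/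
lemma coverage {w : V} (hw : w ∈ tilde (multiplex E VS)) :
    ∃ s ∈ VS, CoReach E (tilde (multiplex E VS)) s w := by
  obtain ⟨p, hp, q, hq, hpq, z, h | h⟩ := (mem_W_iff hG hS).1 hw
  · exact ⟨p, hp, (coverage_CL hG hS hp hq hpq _ h).1⟩
  · exact ⟨q, hq, (coverage_CL hG hS hp hq hpq _ h).2⟩

end Rank2

end TransOrient
namespace TransOrient

set_option linter.unusedSectionVars false
set_option maxHeartbeats 1000000

open Relation

section Rank2Main

variable {V : Type*} {E : Set (V × V)} (hG : IsGraph E)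
  {VS : Set V} (hS : IsSimplex E VS)

include hG hS

lemma rank2_iso (h3 : 3 ≤ VS.ncard) {F_M : Set (Set V)}
    (hpart : IsPartitionOf (tilde (multiplex E VS)) F_M)
    (hblocks : ∀ X ∈ F_M, IsMaxStrongPartitiveIn E (tilde (multiplex E VS)) X) :
    GraphIso F_M (quotAdj E (tilde (multiplex E VS)))
      VS (fun a b : V => (a, b) ∈ E) := by
  set W := tilde (multiplex E VS) with hWdef
  -- every simplex vertex is in W
  have hVSW : ∀ s ∈ VS, s ∈ W := by
    intro s hs
    obtain ⟨t, ht, hts, _⟩ := exists_third hS.1 h3 (s := s) (t := s)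
    exact vs_sub_W hG hS hs ht (Ne.symm hts)
  -- main dichotomy for blocks
  have dich : ∀ X ∈ F_M, ∀ s ∈ VS, s ∈ X → coComp E W s ⊆ X := by
    intro X hX s hs hsX
    by_cases hsub : coComp E W s ⊆ X
    · exact hsub
    · exfalso
      have hXC : X ⊆ coComp E W s :=
        partitive_vs_coComp hG (hblocks X hX).1.1 (hVSW s hs)
          ⟨s, hsX, mem_coComp_self s⟩ hsub
      obtain ⟨t, ht, hts, _⟩ := exists_third hS.1 h3 (s := s) (t := s)
      have hCne : coComp E W s ≠ W := by
        intro heq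
        have : t ∈ coComp E W s := by rw [heq]; exact hVSW t ht
        exact simplex_not_coReach hG hS h3 hs ht (Ne.symm hts) this
      have := (hblocks X hX).2.2 (coComp E W s)
        (coComp_strong hG (hVSW s hs)) hCne hXC
      exact hsub (this ▸ (subset_refl X))
  -- every block contains a simplex vertex whose co-component it contains
  have exists_s : ∀ X ∈ F_M, ∃ s ∈ VS, s ∈ X := by
    intro X hX
    obtain ⟨x, hx⟩ := hpart.1 X hX
    have hxW : x ∈ W := (hblocks X hX).1.1.1 hx
    obtain ⟨s, hs, hreach⟩ := coverage hG hS hxW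
    by_cases hsub : coComp E W s ⊆ X
    · exact ⟨s, hs, hsub (mem_coComp_self s)⟩
    · have hXC : X ⊆ coComp E W s :=
        partitive_vs_coComp hG (hblocks X hX).1.1 (hVSW s hs)
          ⟨x, hx, hreach⟩ hsub
      obtain ⟨t, ht, hts, _⟩ := exists_third hS.1 h3 (s := s) (t := s)
      have hCne : coComp E W s ≠ W := by
        intro heq
        have : t ∈ coComp E W s := by rw [heq]; exact hVSW t ht
        exact simplex_not_coReach hG hS h3 hs ht (Ne.symm hts) this
      have heq := (hblocks X hX).2.2 (coComp E W s)
        (coComp_strong hG (hVSW s hs)) hCne hXC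
      exact ⟨s, hs, heq ▸ (mem_coComp_self s)⟩
  -- uniqueness of the simplex vertex in a block
  have uniq : ∀ X ∈ F_M, ∀ s ∈ VS, ∀ t ∈ VS, s ∈ X → t ∈ X → s = t := by
    intro X hX s hs t ht hsX htX
    by_contra hst
    have hCsX : coComp E W s ⊆ X := dich X hX s hs hsX
    have hXW : X ⊆ W := (hblocks X hX).1.1.1
    have hXneW : X ≠ W := (hblocks X hX).2.1
    obtain ⟨w0, hw0W, hw0X⟩ : ∃ w0, w0 ∈ W ∧ w0 ∉ X := by
      by_contra hc
      push_neg at hc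
      exact hXneW (Set.Subset.antisymm hXW hc)
    -- every vertex of W \ X is joined to all of X
    have joined : ∀ w, w ∈ W → w ∉ X → ∀ c ∈ X, (w, c) ∈ E := by
      intro w hwW hwX c hcX
      have hwC : w ∉ coComp E W s := fun h => hwX (hCsX h)
      have hsw : (s, w) ∈ E :=
        adj_of_not_coReach hG (hVSW s hs) (mem_coComp_self s) hwW hwC
      have hpartX := (hblocks X hX).1.1.2 s hsX c hcX w ⟨hwW, hwX⟩
      have : (c, w) ∈ edgesOn E W := hpartX.1 ⟨hsw, hVSW s hs, hwW⟩
      exact (hG.2 _ _).1 this.1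
    -- the partitive set coComp s ∪ (W \ X)
    set Y := coComp E W s ∪ (W \ X) with hYdef
    have hYW : Y ⊆ W := by
      rintro a (h | h)
      · exact coComp_sub (hVSW s hs) h
      · exact h.1
    have hYpart : IsPartitiveIn E W Y := by
      refine ⟨hYW, ?_⟩
      intro a ha b hb c hc
      have hcX : c ∈ X ∧ c ∉ coComp E W s := by
        constructor
        · by_contra hcc
          exact hc.2 (Or.inr ⟨hc.1, hcc⟩)
        · exact fun h => hc.2 (Or.inl h)
      have hadj : ∀ z ∈ Y, (z, c) ∈ E := by
        rintro z (hz | hz)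
        · exact adj_of_not_coReach hG (hVSW s hs) hz hc.1 hcX.2
        · exact joined z hz.1 hz.2 c hcX.1
      constructor
      · intro _; exact ⟨hadj b hb, hYW hb, hc.1⟩
      · intro _; exact ⟨hadj a ha, hYW ha, hc.1⟩
    have hmeet : (Y ∩ X).Nonempty := ⟨s, Or.inl (mem_coComp_self s), hsX⟩
    rcases (hblocks X hX).1.2 Y hYpart hmeet with hXY | hYX
    · rcases hXY htX with h | h
      · exact simplex_not_coReach hG hS h3 hs ht hst h
      · exact h.2 htX
    · exact hw0X (by
        have : w0 ∈ Y := Or.inr ⟨hw0W, hw0X⟩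
        exact hYX this)
  -- the map
  classical
  have hex : ∀ X : Set V, X ∈ F_M → ∃ s, s ∈ VS ∧ s ∈ X := by
    intro X hX
    obtain ⟨s, hs, hsX⟩ := exists_s X hX
    exact ⟨s, hs, hsX⟩
  set f : Set V → V := fun X =>
    if h : ∃ s, s ∈ VS ∧ s ∈ X then h.choose else hS.2.1.choose with hfdef
  have fspec : ∀ X ∈ F_M, f X ∈ VS ∧ f X ∈ X := by
    intro X hX
    have h := hex X hX
    simp only [hfdef, dif_pos h]
    exact h.choose_spec
  have finj : ∀ X ∈ F_M, ∀ Y ∈ F_M, f X = f Y → X = Y := by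
    intro X hX Y hY hf
    by_contra hne
    have h1 := (fspec X hX).2
    have h2 := (fspec Y hY).2
    rw [hf] at h1
    have := hpart.2.2 X hX Y hY hne
    exact absurd (Set.mem_inter h1 h2 : f Y ∈ X ∩ Y) (by rw [this]; exact Set.notMem_empty _)
  refine ⟨f, ⟨?_, ?_, ?_⟩, ?_⟩
  · intro X hX
    exact (fspec X hX).1
  · intro X hX Y hY hf
    exact finj X hX Y hY hf
  · intro s hs
    have hsW : s ∈ W := hVSW s hs
    have : s ∈ ⋃₀ F_M := by rw [hpart.2.1]; exact hsW
    obtain ⟨X, hX, hsX⟩ := this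
    refine ⟨X, hX, ?_⟩
    exact uniq X hX (f X) (fspec X hX).1 s hs (fspec X hX).2 hsX
  · intro X hX Y hY
    constructor
    · rintro ⟨hne, _⟩
      have hfne : f X ≠ f Y := fun h => hne (finj X hX Y hY h)
      exact vs_edge hS (fspec X hX).1 (fspec Y hY).1 hfne
    · intro hadj
      have hfne : f X ≠ f Y := by
        intro h
        rw [h] at hadj
        exact hG.1 _ hadj
      have hne : X ≠ Y := fun h => hfne (by rw [h])
      exact ⟨hne, f X, (fspec X hX).2, f Y, (fspec Y hY).2,
        hadj, hVSW _ (fspec X hX).1, hVSW _ (fspec Y hY).1⟩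

end Rank2Main

end TransOrient
namespace TransOrient

set_option linter.unusedSectionVars false
set_option maxHeartbeats 1000000

open Relation

section Rank1

variable {V : Type*} {E : Set (V × V)} (hG : IsGraph E)
  {VS : Set V} (hS : IsSimplex E VS)
  {s t : V} (hs : s ∈ VS) (ht : t ∈ VS) (hst : s ≠ t)
  (hVS : VS = {s, t})

include hG hS hs ht hst hVS

lemma W_eq_tilde : tilde (multiplex E VS) = tilde (CL E (s, t)) := by
  apply Set.Subset.antisymm
  · intro w hw
    obtain ⟨p, hp, q, hq, hpq, hpqw⟩ := (mem_W_iff hG hS).1 hw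
    rw [hVS] at hp hq
    rcases hp with rfl | rfl
    · rcases hq with rfl | rfl
      · exact absurd rfl hpq
      · exact hpqw
    · rcases hq with rfl | rfl
      · rw [tilde_CL_comm hG] at hpqw
        exact hpqw
      · exact absurd rfl hpq
  · exact tilde_CL_sub_W hG hS hs ht hst

lemma rank1_coverage {w : V} (hw : w ∈ tilde (multiplex E VS)) :
    CoReach E (tilde (multiplex E VS)) s w ∨
    CoReach E (tilde (multiplex E VS)) t w := by
  have hw' : w ∈ tilde (CL E (s, t)) := by
    rw [← W_eq_tilde hG hS hs ht hst hVS]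
    exact hw
  obtain ⟨z, h | h⟩ := hw'
  · exact Or.inl (coverage_CL hG hS hs ht hst _ h).1
  · exact Or.inr (coverage_CL hG hS hs ht hst _ h).2

lemma rank1_block_eq {F_M : Set (Set V)}
    (hpart : IsPartitionOf (tilde (multiplex E VS)) F_M)
    (hblocks : ∀ X ∈ F_M, IsMaxStrongPartitiveIn E (tilde (multiplex E VS)) X)
    (hnr : ¬ CoReach E (tilde (multiplex E VS)) s t)
    {X : Set V} (hX : X ∈ F_M) {x : V} (hx : x ∈ X)
    (hreach : CoReach E (tilde (multiplex E VS)) s x) :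
    X = coComp E (tilde (multiplex E VS)) s := by
  set W := tilde (multiplex E VS) with hWdef
  have hsW : s ∈ W := vs_sub_W hG hS hs ht hst
  have htW : t ∈ W := vs_sub_W hG hS ht hs hst.symm
  have hsCt : s ∉ coComp E W t := fun h => hnr (coReach_symm hG h)
  have hXW : X ⊆ W := (hblocks X hX).1.1.1
  have hXneW : X ≠ W := (hblocks X hX).2.1
  by_cases hsub : coComp E W s ⊆ X
  · apply Set.Subset.antisymm _ hsub
    intro y hyX
    by_contra hyCs
    have hyW : y ∈ W := hXW hyX
    have hyCt : y ∈ coComp E W t := by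
      rcases rank1_coverage hG hS hs ht hst hVS hyW with h | h
      · exact absurd h hyCs
      · exact h
    by_cases hsub2 : coComp E W t ⊆ X
    · apply hXneW
      apply Set.Subset.antisymm hXW
      intro w hw
      rcases rank1_coverage hG hS hs ht hst hVS hw with h | h
      · exact hsub h
      · exact hsub2 h
    · have hXCt : X ⊆ coComp E W t :=
        partitive_vs_coComp hG (hblocks X hX).1.1 htW ⟨y, hyX, hyCt⟩ hsub2
      exact hsCt (hXCt (hsub (mem_coComp_self s)))
  · have hXC : X ⊆ coComp E W s :=
      partitive_vs_coComp hG (hblocks X hX).1.1 hsW ⟨x, hx, hreach⟩ hsub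
    have hCne : coComp E W s ≠ W := by
      intro heq
      have : t ∈ coComp E W s := by rw [heq]; exact htW
      exact hnr this
    exact (hblocks X hX).2.2 (coComp E W s) (coComp_strong hG hsW) hCne hXC

lemma rank1_case1 {F_M : Set (Set V)}
    (hpart : IsPartitionOf (tilde (multiplex E VS)) F_M)
    (hblocks : ∀ X ∈ F_M, IsMaxStrongPartitiveIn E (tilde (multiplex E VS)) X)
    (hnr : ¬ CoReach E (tilde (multiplex E VS)) s t) :
    GraphIso F_M (quotAdj E (tilde (multiplex E VS)))
      VS (fun a b : V => (a, b) ∈ E) := by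
  set W := tilde (multiplex E VS) with hWdef
  have hVS' : VS = {t, s} := by rw [hVS]; exact Set.pair_comm s t
  have hnr' : ¬ CoReach E W t s := fun h => hnr (coReach_symm hG h)
  have hsW : s ∈ W := vs_sub_W hG hS hs ht hst
  have htW : t ∈ W := vs_sub_W hG hS ht hs hst.symm
  set Cs := coComp E W s with hCs
  set Ct := coComp E W t with hCt
  have htCs : t ∉ Cs := hnr
  have hsCt : s ∉ Ct := fun h => hnr (coReach_symm hG h)
  have hCsCt : Cs ≠ Ct := fun h => hsCt (h ▸ mem_coComp_self s)
  have hblockeq : ∀ X ∈ F_M, X = Cs ∨ X = Ct := by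
    intro X hX
    obtain ⟨x, hx⟩ := hpart.1 X hX
    have hxW : x ∈ W := (hblocks X hX).1.1.1 hx
    rcases rank1_coverage hG hS hs ht hst hVS hxW with h | h
    · exact Or.inl (rank1_block_eq hG hS hs ht hst hVS hpart hblocks hnr hX hx h)
    · exact Or.inr (rank1_block_eq hG hS ht hs hst.symm hVS' hpart hblocks hnr' hX hx h)
  have hCsF : Cs ∈ F_M := by
    have : s ∈ ⋃₀ F_M := by rw [hpart.2.1]; exact hsW
    obtain ⟨X, hX, hsX⟩ := this
    rcases hblockeq X hX with rfl | rfl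
    · exact hX
    · exact absurd hsX hsCt
  have hCtF : Ct ∈ F_M := by
    have : t ∈ ⋃₀ F_M := by rw [hpart.2.1]; exact htW
    obtain ⟨X, hX, htX⟩ := this
    rcases hblockeq X hX with rfl | rfl
    · exact absurd htX htCs
    · exact hX
  classical
  set f : Set V → V := fun X => if X = Cs then s else t with hfdef
  have hfCs : f Cs = s := by simp [hfdef]
  have hfCt : f Ct = t := by simp [hfdef, Ne.symm hCsCt]
  refine ⟨f, ⟨?_, ?_, ?_⟩, ?_⟩
  · intro X hX
    rcases hblockeq X hX with rfl | rfl
    · rw [hfCs]; exact hs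
    · rw [hfCt]; exact ht
  · intro X hX Y hY hf
    rcases hblockeq X hX with rfl | rfl <;> rcases hblockeq Y hY with rfl | rfl
    · rfl
    · rw [hfCs, hfCt] at hf; exact absurd hf hst
    · rw [hfCs, hfCt] at hf; exact absurd hf.symm hst
    · rfl
  · intro v hv
    rw [hVS] at hv
    rcases hv with rfl | rfl
    · exact ⟨Cs, hCsF, hfCs⟩
    · exact ⟨Ct, hCtF, hfCt⟩
  · intro X hX Y hY
    have hstE : (s, t) ∈ E := vs_edge hS hs ht hst
    rcases hblockeq X hX with rfl | rfl <;> rcases hblockeq Y hY with rfl | rfl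
    · constructor
      · rintro ⟨hne, _⟩; exact absurd rfl hne
      · intro h; rw [hfCs] at h; exact absurd h (hG.1 s)
    · constructor
      · intro _; rw [hfCs, hfCt]; exact hstE
      · intro _
        exact ⟨hCsCt, s, mem_coComp_self s, t, mem_coComp_self t,
          hstE, hsW, htW⟩
    · constructor
      · intro _; rw [hfCs, hfCt]; exact (hG.2 _ _).1 hstE
      · intro _
        exact ⟨Ne.symm hCsCt, t, mem_coComp_self t, s, mem_coComp_self s,
          (hG.2 _ _).1 hstE, htW, hsW⟩
    · constructor
      · rintro ⟨hne, _⟩; exact absurd rfl hne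
      · intro h; rw [hfCt] at h; exact absurd h (hG.1 t)

end Rank1

end TransOrient
namespace TransOrient

set_option linter.unusedSectionVars false
set_option maxHeartbeats 1000000

open Relation

section Rank1Case2

variable {V : Type*} {E : Set (V × V)} (hG : IsGraph E)
  {VS : Set V} (hS : IsSimplex E VS)
  {s t : V} (hs : s ∈ VS) (ht : t ∈ VS) (hst : s ≠ t)
  (hVS : VS = {s, t})

include hG hS hs ht hst hVS

omit hS hs ht hst hVS in
lemma edgesOn_iff {W : Set V} {a b : V} (haW : a ∈ W) (hbW : b ∈ W) :
    (a, b) ∈ edgesOn E W ↔ (a, b) ∈ E :=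
  ⟨fun h => h.1, fun h => ⟨h, haW, hbW⟩⟩

/-- edge-connectivity within `W`. -/
def ER (E : Set (V × V)) (W : Set V) : V → V → Prop :=
  Relation.ReflTransGen (fun x y => x ∈ W ∧ y ∈ W ∧ (x, y) ∈ E)

omit hS hs ht hst hVS in
lemma er_symm {W : Set V} : Symmetric (ER E W) := by
  have : Symmetric (fun x y => x ∈ W ∧ y ∈ W ∧ (x, y) ∈ E) := by
    rintro x y ⟨h1, h2, h3⟩
    exact ⟨h2, h1, (hG.2 _ _).1 h3⟩
  haveI : Std.Symm (fun x y => x ∈ W ∧ y ∈ W ∧ (x, y) ∈ E) := ⟨fun _ _ h' => this h'⟩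
  exact fun _ _ h => (show ReflTransGen (fun x y => x ∈ W ∧ y ∈ W ∧ (x, y) ∈ E) _ _ from
    symm (show ReflTransGen (fun x y => x ∈ W ∧ y ∈ W ∧ (x, y) ∈ E) _ _ from h))

lemma er_all {w : V} (hw : w ∈ tilde (multiplex E VS)) :
    ER E (tilde (multiplex E VS)) s w := by
  set W := tilde (multiplex E VS) with hWdef
  have hsW : s ∈ W := vs_sub_W hG hS hs ht hst
  have htW : t ∈ W := vs_sub_W hG hS ht hs hst.symm
  have hT : tilde (CL E (s, t)) ⊆ W := tilde_CL_sub_W hG hS hs ht hst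
  have key : ∀ f ∈ CL E (s, t), ER E W s f.1 ∧ ER E W s f.2 := by
    intro f hf
    induction hf with
    | refl =>
        exact ⟨ReflTransGen.refl,
          ReflTransGen.single ⟨hsW, htW, vs_edge hS hs ht hst⟩⟩
    | @tail f g hf hfg ih =>
        obtain ⟨f1, f2⟩ := f
        obtain ⟨g1, g2⟩ := g
        have hfC : (f1, f2) ∈ CL E (s, t) := hf
        have hgC : (g1, g2) ∈ CL E (s, t) := hf.tail hfg
        have hg1W : g1 ∈ W := hT ⟨g2, Or.inl hgC⟩
        have hg2W : g2 ∈ W := hT ⟨g1, Or.inr hgC⟩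
        have hgE : (g1, g2) ∈ E := hfg.2.1
        rcases hfg.2.2 with ⟨heq, hne⟩ | ⟨heq, hne⟩
        · simp only at heq hne ih ⊢
          subst heq
          exact ⟨ih.1, ih.1.tail ⟨hg1W, hg2W, hgE⟩⟩
        · simp only at heq hne ih ⊢
          subst heq
          exact ⟨ih.2.tail ⟨hg2W, hg1W, (hG.2 _ _).1 hgE⟩, ih.2⟩
  have hw' : w ∈ tilde (CL E (s, t)) := by
    rw [← W_eq_tilde hG hS hs ht hst hVS]; exact hw
  obtain ⟨z, h | h⟩ := hw'
  · exact (key _ h).1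
  · exact (key _ h).2

/-- an edge of the color class of `(s,t)` is never inside a proper partitive
set of `G(W)`. -/
lemma hatA_not_inside {Z : Set V} (hZ : IsPartitiveIn E (tilde (multiplex E VS)) Z)
    {u v : V} (hm : (u, v) ∈ hat (CL E (s, t))) (hu : u ∈ Z) (hv : v ∈ Z) :
    tilde (multiplex E VS) ⊆ Z := by
  have hWeq := W_eq_tilde hG hS hs ht hst hVS
  rcases hm with h | h
  · have hcl : CL E (u, v) = CL E (s, t) := CL_eq_of_mem hG h
    have huvE : (u, v) ∈ E := CL_sub_E hG (vs_edge hS hs ht hst) h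
    have := absorb_tilde hG hZ huvE (by rw [hcl, ← hWeq]) hu hv
    rw [hcl, ← hWeq] at this
    exact this
  · have hcl : CL E (v, u) = CL E (s, t) := CL_eq_of_mem hG h
    have hvuE : (v, u) ∈ E := CL_sub_E hG (vs_edge hS hs ht hst) h
    have := absorb_tilde hG hZ hvuE (by rw [hcl, ← hWeq]) hv hu
    rw [hcl, ← hWeq] at this
    exact this

omit hs ht hst hVS in
/-- every vertex of `W` is the endpoint of an edge of the color class. -/
lemma exists_hatA_edge {p q : V} (hWeq : tilde (multiplex E VS) = tilde (CL E (p, q)))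
    {w : V} (hw : w ∈ tilde (multiplex E VS)) :
    ∃ z, (w, z) ∈ hat (CL E (p, q)) := by
  rw [hWeq] at hw
  obtain ⟨z, h | h⟩ := hw
  · exact ⟨z, Or.inl h⟩
  · exact ⟨z, Or.inr h⟩

section WithReach

variable (hr : CoReach E (tilde (multiplex E VS)) s t)

include hr

lemma reach_all {w : V} (hw : w ∈ tilde (multiplex E VS)) :
    CoReach E (tilde (multiplex E VS)) s w := by
  rcases rank1_coverage hG hS hs ht hst hVS hw with h | h
  · exact h
  · exact coReach_trans hr h

lemma reach_any {w w' : V} (hw : w ∈ tilde (multiplex E VS))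
    (hw' : w' ∈ tilde (multiplex E VS)) :
    CoReach E (tilde (multiplex E VS)) w w' :=
  coReach_trans (coReach_symm hG (reach_all hG hS hs ht hst hVS hr hw))
    (reach_all hG hS hs ht hst hVS hr hw')

/-- the three-part lemma: two overlapping partitive sets cannot cover `W`. -/
lemma three_part {Y Z : Set V}
    (hY : IsPartitiveIn E (tilde (multiplex E VS)) Y)
    (hZ : IsPartitiveIn E (tilde (multiplex E VS)) Z)
    (hI : (Y ∩ Z).Nonempty) (hD : (Z \ Y).Nonempty) (hR : (Y \ Z).Nonempty)
    (hcover : tilde (multiplex E VS) ⊆ Y ∪ Z) : False := by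
  set W := tilde (multiplex E VS) with hWdef
  obtain ⟨d0, hd0⟩ := hD
  obtain ⟨r0, hr0⟩ := hR
  have hd0W : d0 ∈ W := hZ.1 hd0.1
  have hr0W : r0 ∈ W := hY.1 hr0.1
  -- uniform adjacency between Z and Y \ Z
  have claim1 : ∀ z ∈ Z, ∀ r, r ∈ Y \ Z → ((z, r) ∈ E ↔ (d0, r) ∈ E) := by
    intro z hz r hrmem
    have := hZ.2 z hz d0 hd0.1 r ⟨hY.1 hrmem.1, hrmem.2⟩
    rw [edgesOn_iff hG (hZ.1 hz) (hY.1 hrmem.1),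
      edgesOn_iff hG (hZ.1 hd0.1) (hY.1 hrmem.1)] at this
    exact this
  have claim2 : ∀ y ∈ Y, ∀ d, d ∈ Z \ Y → ((y, d) ∈ E ↔ (r0, d) ∈ E) := by
    intro y hy d hdmem
    have := hY.2 y hy r0 hr0.1 d ⟨hZ.1 hdmem.1, hdmem.2⟩
    rw [edgesOn_iff hG (hY.1 hy) (hZ.1 hdmem.1),
      edgesOn_iff hG (hY.1 hr0.1) (hZ.1 hdmem.1)] at this
    exact this
  -- all cross pairs between Z and Y \ Z are equivalent to (d0, r0)
  have cross : ∀ z ∈ Z, ∀ r, r ∈ Y \ Z → ((z, r) ∈ E ↔ (d0, r0) ∈ E) := by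
    intro z hz r hrmem
    rw [claim1 z hz r hrmem]
    have h1 : ((d0, r) ∈ E ↔ (r, d0) ∈ E) := hG.2 _ _
    rw [h1, claim2 r hrmem.1 d0 hd0]
    exact (hG.2 _ _).symm
  by_cases hrho : (d0, r0) ∈ E
  · -- joined: no co-path can cross from Z to Y \ Z, but W is co-connected
    have key : ∀ z, CoReach E W d0 z → z ∈ Z := by
      intro z hz
      induction hz with
      | refl => exact hd0.1
      | @tail z z' hz hstep ih =>
          by_cases hz'Z : z' ∈ Z
          · exact hz'Z
          · exfalso
            have hz'Y : z' ∈ Y \ Z := ⟨by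
              rcases hcover hstep.2.1 with h | h
              · exact h
              · exact absurd h hz'Z, hz'Z⟩
            have := (cross z ih z' hz'Y).2 hrho
            exact hstep.2.2 this
    exact hr0.2 (key r0 (reach_any hG hS hs ht hst hVS hr hd0W hr0W))
  · -- not joined: no edge-path can cross from Z to Y \ Z, but W is connected
    have key : ∀ z, ER E W d0 z → z ∈ Z := by
      intro z hz
      induction hz with
      | refl => exact hd0.1
      | @tail z z' hz hstep ih =>
          by_cases hz'Z : z' ∈ Z
          · exact hz'Z
          · exfalso
            have hz'Y : z' ∈ Y \ Z := ⟨by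
              rcases hcover hstep.2.1 with h | h
              · exact h
              · exact absurd h hz'Z, hz'Z⟩
            exact hrho ((cross z ih z' hz'Y).1 hstep.2.2)
    have her : ER E W d0 r0 :=
      (er_symm hG (er_all hG hS hs ht hst hVS hd0W)).trans
        (er_all hG hS hs ht hst hVS hr0W)
    exact hr0.2 (key r0 her)

end WithReach

end Rank1Case2

end TransOrient
namespace TransOrient

set_option linter.unusedSectionVars false
set_option maxHeartbeats 1000000

open Relation

section Rank1Blocks

variable {V : Type*} {E : Set (V × V)} (hG : IsGraph E)
  {VS : Set V} (hS : IsSimplex E VS)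
  {s t : V} (hs : s ∈ VS) (ht : t ∈ VS) (hst : s ≠ t)
  (hVS : VS = {s, t})
  {F_M : Set (Set V)}
  (hpart : IsPartitionOf (tilde (multiplex E VS)) F_M)
  (hblocks : ∀ X ∈ F_M, IsMaxStrongPartitiveIn E (tilde (multiplex E VS)) X)

include hG hpart hblocks

omit hS hs ht hst hVS in
lemma blocks_disjoint {X Y : Set V} (hX : X ∈ F_M) (hY : Y ∈ F_M)
    (hne : X ≠ Y) {x : V} (hx : x ∈ X) : x ∉ Y := by
  intro hy
  have := hpart.2.2 X hX Y hY hne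
  exact absurd (Set.mem_inter hx hy) (by rw [this]; exact Set.notMem_empty _)

omit hS hs ht hst hVS in
lemma cross_uniform {X Y : Set V} (hX : X ∈ F_M) (hY : Y ∈ F_M) (hne : X ≠ Y)
    {x y : V} (hx : x ∈ X) (hy : y ∈ Y) (he : (x, y) ∈ E)
    {x' y' : V} (hx' : x' ∈ X) (hy' : y' ∈ Y) : (x', y') ∈ E := by
  set W := tilde (multiplex E VS) with hWdef
  have hXp := (hblocks X hX).1.1
  have hYp := (hblocks Y hY).1.1
  have hyX : y ∉ X := blocks_disjoint hG hpart hblocks hY hX (Ne.symm hne) hy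
  have hx'Y : x' ∉ Y := blocks_disjoint hG hpart hblocks hX hY hne hx'
  have step1 : (x', y) ∈ E := by
    have := hXp.2 x hx x' hx' y ⟨hYp.1 hy, hyX⟩
    rw [edgesOn_iff hG (hXp.1 hx) (hYp.1 hy),
      edgesOn_iff hG (hXp.1 hx') (hYp.1 hy)] at this
    exact this.1 he
  have step2 : (y, x') ∈ E := (hG.2 _ _).1 step1
  have : (y', x') ∈ E := by
    have := hYp.2 y hy y' hy' x' ⟨hXp.1 hx', hx'Y⟩
    rw [edgesOn_iff hG (hYp.1 hy) (hXp.1 hx'),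
      edgesOn_iff hG (hYp.1 hy') (hXp.1 hx')] at this
    exact this.1 step2
  exact (hG.2 _ _).1 this

omit hS hs ht hst hVS in
lemma adj_iff_quotAdj {X Y : Set V} (hX : X ∈ F_M) (hY : Y ∈ F_M) (hne : X ≠ Y)
    {x y : V} (hx : x ∈ X) (hy : y ∈ Y) :
    ((x, y) ∈ E ↔ quotAdj E (tilde (multiplex E VS)) X Y) := by
  constructor
  · intro he
    exact ⟨hne, x, hx, y, hy, he, (hblocks X hX).1.1.1 hx, (hblocks Y hY).1.1.1 hy⟩
  · rintro ⟨_, x0, hx0, y0, hy0, he⟩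
    exact cross_uniform hG hpart hblocks hX hY hne hx0 hy0 he.1 hx hy

omit hS hs ht hst hVS in
lemma union_blocks_partitive {Q : Set (Set V)}
    (hQ : IsPartitiveGen F_M (quotAdj E (tilde (multiplex E VS))) Q) :
    IsPartitiveIn E (tilde (multiplex E VS)) (⋃₀ Q) := by
  set W := tilde (multiplex E VS) with hWdef
  constructor
  · rintro a ⟨A, hA, haA⟩
    exact (hblocks A (hQ.1 hA)).1.1.1 haA
  · rintro a ⟨A, hA, haA⟩ b ⟨B, hB, hbB⟩ c hc
    obtain ⟨C, hC, hcC⟩ : ∃ C ∈ F_M, c ∈ C := by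
      have : c ∈ ⋃₀ F_M := by rw [hpart.2.1]; exact hc.1
      exact this
    have hCQ : C ∉ Q := by
      intro hCQ
      exact hc.2 ⟨C, hCQ, hcC⟩
    have hAC : A ≠ C := by
      rintro rfl
      exact hCQ hA
    have hBC : B ≠ C := by
      rintro rfl
      exact hCQ hB
    have haW : a ∈ W := (hblocks A (hQ.1 hA)).1.1.1 haA
    have hbW : b ∈ W := (hblocks B (hQ.1 hB)).1.1.1 hbB
    rw [edgesOn_iff hG haW hc.1, edgesOn_iff hG hbW hc.1]
    rw [adj_iff_quotAdj hG hpart hblocks (hQ.1 hA) hC hAC haA hcC,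
      adj_iff_quotAdj hG hpart hblocks (hQ.1 hB) hC hBC hbB hcC]
    exact hQ.2 A hA B hB C ⟨hC, hCQ⟩

include hS hs ht hst hVS in
/-- Zorn: every proper partitive superset extends to a maximal one. -/
lemma exists_maximal_partitive {Z0 : Set V}
    (hZ0 : IsPartitiveIn E (tilde (multiplex E VS)) Z0)
    (hZ0ne : Z0 ≠ tilde (multiplex E VS)) :
    ∃ m, Z0 ⊆ m ∧ IsPartitiveIn E (tilde (multiplex E VS)) m ∧
      m ≠ tilde (multiplex E VS) ∧
      ∀ a, IsPartitiveIn E (tilde (multiplex E VS)) a →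
        a ≠ tilde (multiplex E VS) → m ⊆ a → a = m := by
  set W := tilde (multiplex E VS) with hWdef
  have hsW : s ∈ W := vs_sub_W hG hS hs ht hst
  have htW : t ∈ W := vs_sub_W hG hS ht hs hst.symm
  set S : Set (Set V) := {Z | IsPartitiveIn E W Z ∧ Z ≠ W} with hSdef
  have hH : ∀ c ⊆ S, IsChain (· ⊆ ·) c → c.Nonempty →
      ∃ ub ∈ S, ∀ s ∈ c, s ⊆ ub := by
    intro c hcS hchain hcne
    refine ⟨⋃₀ c, ⟨⟨?_, ?_⟩, ?_⟩, ?_⟩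
    · rintro a ⟨Za, hZa, haZa⟩
      exact (hcS hZa).1.1 haZa
    · rintro a ⟨Za, hZa, haZa⟩ b ⟨Zb, hZb, hbZb⟩ cc hcc
      have : ∃ Zc ∈ c, a ∈ Zc ∧ b ∈ Zc := by
        rcases eq_or_ne Za Zb with rfl | hne
        · exact ⟨Za, hZa, haZa, hbZb⟩
        · rcases hchain hZa hZb hne with h | h
          · exact ⟨Zb, hZb, h haZa, hbZb⟩
          · exact ⟨Za, hZa, haZa, h hbZb⟩
      obtain ⟨Zc, hZc, haZc, hbZc⟩ := this
      have hccZc : cc ∈ W \ Zc := ⟨hcc.1, fun h => hcc.2 ⟨Zc, hZc, h⟩⟩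
      exact (hcS hZc).1.2 a haZc b hbZc cc hccZc
    · intro heq
      have hsU : s ∈ ⋃₀ c := by rw [heq]; exact hsW
      have htU : t ∈ ⋃₀ c := by rw [heq]; exact htW
      obtain ⟨Za, hZa, hsZa⟩ := hsU
      obtain ⟨Zb, hZb, htZb⟩ := htU
      have : ∃ Zc ∈ c, s ∈ Zc ∧ t ∈ Zc := by
        rcases eq_or_ne Za Zb with rfl | hne
        · exact ⟨Za, hZa, hsZa, htZb⟩
        · rcases hchain hZa hZb hne with h | h
          · exact ⟨Zb, hZb, h hsZa, htZb⟩
          · exact ⟨Za, hZa, hsZa, h htZb⟩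
      obtain ⟨Zc, hZc, hsZc, htZc⟩ := this
      have hsub := hatA_not_inside hG hS hs ht hst hVS (hcS hZc).1
        (Or.inl (ReflTransGen.refl)) hsZc htZc
      exact (hcS hZc).2 (Set.Subset.antisymm (hcS hZc).1.1 hsub)
    · intro z hz
      exact fun a ha => ⟨z, hz, ha⟩
  obtain ⟨m, hm1, hm2⟩ := zorn_subset_nonempty S hH Z0 ⟨hZ0, hZ0ne⟩
  exact ⟨m, hm1, hm2.1.1, hm2.1.2, fun a hap hane hma =>
    Set.Subset.antisymm (hm2.2 ⟨hap, hane⟩ hma) hma⟩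

include hS hs ht hst hVS in
/-- a maximal proper partitive set of `G(W)` is strong (case 2). -/
lemma maximal_partitive_strong (hr : CoReach E (tilde (multiplex E VS)) s t)
    {m : Set V} (hm : IsPartitiveIn E (tilde (multiplex E VS)) m)
    (hmne : m ≠ tilde (multiplex E VS))
    (hmax : ∀ a, IsPartitiveIn E (tilde (multiplex E VS)) a →
      a ≠ tilde (multiplex E VS) → m ⊆ a → a = m) :
    IsStrongPartitiveIn E (tilde (multiplex E VS)) m := by
  set W := tilde (multiplex E VS) with hWdef
  refine ⟨hm, ?_⟩
  intro Y hY hmeet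
  by_cases hYm : Y ⊆ m
  · exact Or.inr hYm
  by_cases hmY : m ⊆ Y
  · exact Or.inl hmY
  exfalso
  obtain ⟨i0, hi0⟩ := hmeet
  -- U := Y ∪ m is partitive
  have hU : IsPartitiveIn E W (Y ∪ m) := by
    constructor
    · rintro a (h | h)
      · exact hY.1 h
      · exact hm.1 h
    · have key : ∀ a ∈ Y ∪ m, ∀ cc ∈ W \ (Y ∪ m),
          ((a, cc) ∈ edgesOn E W ↔ (i0, cc) ∈ edgesOn E W) := by
        rintro a (h | h) cc hcc
        · exact hY.2 a h i0 hi0.1 cc ⟨hcc.1, fun hh => hcc.2 (Or.inl hh)⟩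
        · exact hm.2 a h i0 hi0.2 cc ⟨hcc.1, fun hh => hcc.2 (Or.inr hh)⟩
      intro a ha b hb cc hcc
      rw [key a ha cc hcc, key b hb cc hcc]
  by_cases hUW : Y ∪ m = W
  · -- three-part contradiction
    rw [Set.not_subset] at hYm hmY
    obtain ⟨y1, hy1Y, hy1m⟩ := hYm
    obtain ⟨m1, hm1m, hm1Y⟩ := hmY
    exact three_part hG hS hs ht hst hVS hr hY hm ⟨i0, hi0⟩
      ⟨m1, hm1m, hm1Y⟩ ⟨y1, hy1Y, hy1m⟩ (by rw [hUW])
  · have := hmax (Y ∪ m) hU hUW Set.subset_union_right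
    rw [Set.not_subset] at hYm
    obtain ⟨y1, hy1Y, hy1m⟩ := hYm
    exact hy1m (by rw [← this]; exact Or.inl hy1Y)

include hS hs ht hst hVS in
/-- primality of the quotient in case 2. -/
lemma rank1_indec (hr : CoReach E (tilde (multiplex E VS)) s t) :
    IndecomposableGen F_M (quotAdj E (tilde (multiplex E VS))) := by
  set W := tilde (multiplex E VS) with hWdef
  intro Q hQ
  by_contra hcon
  push_neg at hcon
  obtain ⟨hnss, hQne⟩ := hcon
  unfold Set.Nontrivial at hnss
  obtain ⟨XA, hXA, XB, hXB, hAB⟩ := hnss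
  obtain ⟨XC, hXC, hXCQ⟩ : ∃ XC ∈ F_M, XC ∉ Q := by
    by_contra hc
    push_neg at hc
    exact hQne (Set.Subset.antisymm hQ.1 hc)
  set Z0 := ⋃₀ Q with hZ0def
  have hZ0p : IsPartitiveIn E W Z0 := union_blocks_partitive hG hpart hblocks hQ
  have hZ0ne : Z0 ≠ W := by
    intro heq
    obtain ⟨xc, hxc⟩ := hpart.1 XC hXC
    have hxcW : xc ∈ W := (hblocks XC hXC).1.1.1 hxc
    have : xc ∈ Z0 := by rw [heq]; exact hxcW
    obtain ⟨A, hA, hxcA⟩ := this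
    have hACne : A ≠ XC := by
      rintro rfl
      exact hXCQ hA
    exact blocks_disjoint hG hpart hblocks (hQ.1 hA) hXC hACne hxcA hxc
  obtain ⟨m, hZ0m, hmp, hmne, hmax⟩ :=
    exists_maximal_partitive hG hS hs ht hst hVS hpart hblocks hZ0p hZ0ne
  have hmstrong := maximal_partitive_strong hG hS hs ht hst hVS hpart hblocks
    hr hmp hmne hmax
  have hXAm : XA ⊆ m := fun x hx => hZ0m ⟨XA, hXA, hx⟩
  have := (hblocks XA (hQ.1 hXA)).2.2 m hmstrong hmne hXAm
  obtain ⟨xb, hxb⟩ := hpart.1 XB (hQ.1 hXB)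
  have hxbm : xb ∈ m := hZ0m ⟨XB, hXB, hxb⟩
  rw [← this] at hxbm
  exact blocks_disjoint hG hpart hblocks (hQ.1 hXB) (hQ.1 hXA)
    (Ne.symm hAB) hxb hxbm

end Rank1Blocks

end TransOrient
namespace TransOrient

set_option linter.unusedSectionVars false
set_option maxHeartbeats 1000000

open Relation

section QuotientGraph

variable {V : Type*} {E : Set (V × V)} (hG : IsGraph E)
  {VS : Set V} (hS : IsSimplex E VS)
  {s t : V} (hs : s ∈ VS) (ht : t ∈ VS) (hst : s ≠ t)
  (hVS : VS = {s, t})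
  {F_M : Set (Set V)}
  (hpart : IsPartitionOf (tilde (multiplex E VS)) F_M)
  (hblocks : ∀ X ∈ F_M, IsMaxStrongPartitiveIn E (tilde (multiplex E VS)) X)

/-- the quotient graph as an edge set on `Set V`. -/
def EH (E : Set (V × V)) (VS : Set V) (F_M : Set (Set V)) : Set (Set V × Set V) :=
  {P | P.1 ∈ F_M ∧ P.2 ∈ F_M ∧ quotAdj E (tilde (multiplex E VS)) P.1 P.2}

include hG

omit hS in
lemma quotAdj_symm {W : Set V} {X Y : Set V}
    (h : quotAdj E W X Y) : quotAdj E W Y X := by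
  obtain ⟨hne, x, hx, y, hy, he, hxW, hyW⟩ := h
  exact ⟨hne.symm, y, hy, x, hx, (hG.2 _ _).1 he, hyW, hxW⟩

omit hS in
lemma EH_isGraph : IsGraph (EH E VS F_M) := by
  constructor
  · rintro X ⟨_, _, hne, _⟩
    exact hne rfl
  · intro X Y
    constructor
    · rintro ⟨h1, h2, h3⟩
      exact ⟨h2, h1, quotAdj_symm hG h3⟩
    · rintro ⟨h1, h2, h3⟩
      exact ⟨h2, h1, quotAdj_symm hG h3⟩

include hpart hblocks

omit hS in
lemma noadj {X Y : Set V} (hX : X ∈ F_M) (hY : Y ∈ F_M) (hne : X ≠ Y)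
    (hna : ¬ quotAdj E (tilde (multiplex E VS)) X Y)
    {x y : V} (hx : x ∈ X) (hy : y ∈ Y) : (x, y) ∉ E := by
  intro he
  exact hna ⟨hne, x, hx, y, hy, he,
    (hblocks X hX).1.1.1 hx, (hblocks Y hY).1.1.1 hy⟩

include hS hs ht hst hVS

/-- an edge of `hat A` always crosses two distinct blocks. -/
lemma hatA_crosses {u v : V} (hm : (u, v) ∈ hat (CL E (s, t)))
    {X : Set V} (hX : X ∈ F_M) (hu : u ∈ X) (hv : v ∈ X) : False := by
  have hsub := hatA_not_inside hG hS hs ht hst hVS (hblocks X hX).1.1 hm hu hv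
  exact (hblocks X hX).2.1
    (Set.Subset.antisymm (hblocks X hX).1.1.1 hsub)

/-- blocks of the two simplex vertices. -/
lemma proj_hatA {Xs Xt : Set V} (hXs : Xs ∈ F_M) (hXt : Xt ∈ F_M)
    (hsXs : s ∈ Xs) (htXt : t ∈ Xt) :
    ∀ f ∈ CL E (s, t), ∀ Y1 ∈ F_M, ∀ Y2 ∈ F_M, f.1 ∈ Y1 → f.2 ∈ Y2 →
      (Y1, Y2) ∈ hat (CL (EH E VS F_M) (Xs, Xt)) := by
  have hGH := EH_isGraph hG (VS := VS) (F_M := F_M)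
  have hXsXt : Xs ≠ Xt := by
    rintro rfl
    exact hatA_crosses hG hS hs ht hst hVS hpart hblocks
      (Or.inl ReflTransGen.refl) hXs hsXs htXt
  have hW : ∀ {x : V} {X : Set V}, X ∈ F_M → x ∈ X → x ∈ tilde (multiplex E VS) :=
    fun hX hx => (hblocks _ hX).1.1.1 hx
  have huniq : ∀ {x : V} {X Y : Set V}, X ∈ F_M → Y ∈ F_M → x ∈ X → x ∈ Y → X = Y := by
    intro x X Y hX hY hx hy
    by_contra hne
    exact blocks_disjoint hG hpart hblocks hX hY hne hx hy
  have hEH : (Xs, Xt) ∈ EH E VS F_M := by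
    refine ⟨hXs, hXt, hXsXt, s, hsXs, t, htXt, vs_edge hS hs ht hst,
      vs_sub_W hG hS hs ht hst, vs_sub_W hG hS ht hs hst.symm⟩
  intro f hf
  induction hf with
  | refl =>
      intro Y1 hY1 Y2 hY2 h1 h2
      have e1 : Y1 = Xs := huniq hY1 hXs h1 hsXs
      have e2 : Y2 = Xt := huniq hY2 hXt h2 htXt
      rw [e1, e2]
      exact Or.inl ReflTransGen.refl
  | @tail f g hf hfg ih =>
      obtain ⟨f1, f2⟩ := f
      obtain ⟨g1, g2⟩ := g
      have hfC : (f1, f2) ∈ CL E (s, t) := hf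
      have hgC : (g1, g2) ∈ CL E (s, t) := hf.tail hfg
      have hT : tilde (CL E (s, t)) ⊆ tilde (multiplex E VS) :=
        tilde_CL_sub_W hG hS hs ht hst
      have hf1W : f1 ∈ tilde (multiplex E VS) := hT ⟨f2, Or.inl hfC⟩
      have hf2W : f2 ∈ tilde (multiplex E VS) := hT ⟨f1, Or.inr hfC⟩
      have hg1W : g1 ∈ tilde (multiplex E VS) := hT ⟨g2, Or.inl hgC⟩
      have hg2W : g2 ∈ tilde (multiplex E VS) := hT ⟨g1, Or.inr hgC⟩
      have hblock : ∀ {x : V}, x ∈ tilde (multiplex E VS) → ∃ X ∈ F_M, x ∈ X := by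
        intro x hx
        have : x ∈ ⋃₀ F_M := by rw [hpart.2.1]; exact hx
        exact this
      obtain ⟨B1, hB1, hf1B⟩ := hblock hf1W
      obtain ⟨B2, hB2, hf2B⟩ := hblock hf2W
      intro Y1 hY1 Y2 hY2 h1 h2
      rcases hfg.2.2 with ⟨heq, hne⟩ | ⟨heq, hne⟩
      · simp only at heq hne h1 h2 ⊢
        subst heq
        -- right endpoint changed from f2 to g2
        have e1 : Y1 = B1 := huniq hY1 hB1 h1 hf1B
        subst e1
        have hgEdge : (Y1, Y2) ∈ EH E VS F_M := by
          have hne12 : Y1 ≠ Y2 := by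
            rintro rfl
            exact hatA_crosses hG hS hs ht hst hVS hpart hblocks
              (Or.inl hgC) hY1 hf1B h2
          exact ⟨hB1, hY2, hne12, f1, hf1B, g2, h2, hfg.2.1, hg1W, hg2W⟩
        rcases eq_or_ne B2 Y2 with rfl | hB2Y2
        · exact ih Y1 hB1 B2 hB2 hf1B hf2B
        · have hprev := ih Y1 hB1 B2 hB2 hf1B hf2B
          have hnadj : (B2, Y2) ∉ EH E VS F_M := by
            rintro ⟨_, _, hadj⟩
            obtain ⟨_, x0, hx0, y0, hy0, he0⟩ := hadj
            exact hne (cross_uniform hG hpart hblocks hB2 hY2 hB2Y2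
              hx0 hy0 he0.1 hf2B h2)
          exact hat_step_right hGH hEH hprev hnadj hgEdge
      · simp only at heq hne h1 h2 ⊢
        subst heq
        have e2 : Y2 = B2 := huniq hY2 hB2 h2 hf2B
        subst e2
        have hgEdge : (Y1, Y2) ∈ EH E VS F_M := by
          have hne12 : Y1 ≠ Y2 := by
            rintro rfl
            exact hatA_crosses hG hS hs ht hst hVS hpart hblocks
              (Or.inl hgC) hY1 h1 hf2B
          exact ⟨hY1, hB2, hne12, g1, h1, f2, hf2B, hfg.2.1, hg1W, hg2W⟩
        rcases eq_or_ne B1 Y1 with rfl | hB1Y1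
        · exact ih B1 hB1 Y2 hB2 hf1B hf2B
        · have hprev := ih B1 hB1 Y2 hB2 hf1B hf2B
          have hnadj : (B1, Y1) ∉ EH E VS F_M := by
            rintro ⟨_, _, hadj⟩
            obtain ⟨_, x0, hx0, y0, hy0, he0⟩ := hadj
            exact hne (cross_uniform hG hpart hblocks hB1 hY1 hB1Y1
              hx0 hy0 he0.1 hf1B h1)
          exact hat_step_left hGH hEH hprev hnadj hgEdge

end QuotientGraph

end TransOrient
namespace TransOrient

set_option linter.unusedSectionVars false
set_option maxHeartbeats 1000000

open Relation

section GeneralMore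

variable {α : Type*} {E : Set (α × α)} (hG : IsGraph E)

include hG

lemma hat_hat_eq {e0 : α × α} (he0 : e0 ∈ E) {x y : α}
    (h : (x, y) ∈ hat (CL E e0)) :
    hat (CL E (x, y)) = hat (CL E e0) := by
  rcases h with h | h
  · rw [CL_eq_of_mem hG h]
  · rw [hat_CL_comm hG, CL_eq_of_mem hG h]

omit hG in
lemma tilde_eq_of_hat_eq {A B : Set (α × α)} (h : hat A = hat B) :
    tilde A = tilde B := by
  rw [← tilde_hat (A := A), ← tilde_hat (A := B), h]

end GeneralMore

section Case2Quot

variable {V : Type*} {E : Set (V × V)} (hG : IsGraph E)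
  {VS : Set V} (hS : IsSimplex E VS)
  {s t : V} (hs : s ∈ VS) (ht : t ∈ VS) (hst : s ≠ t)
  (hVS : VS = {s, t})
  {F_M : Set (Set V)}
  (hpart : IsPartitionOf (tilde (multiplex E VS)) F_M)
  (hblocks : ∀ X ∈ F_M, IsMaxStrongPartitiveIn E (tilde (multiplex E VS)) X)

include hG hpart hblocks

omit hS in
lemma tilde_classH_partitiveGen {e0 : Set V × Set V} (he0 : e0 ∈ EH E VS F_M) :
    IsPartitiveGen F_M (quotAdj E (tilde (multiplex E VS)))
      (tilde (CL (EH E VS F_M) e0)) := by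
  have hGH := EH_isGraph hG (VS := VS) (F_M := F_M)
  have hsubF : tilde (CL (EH E VS F_M) e0) ⊆ F_M := by
    rintro u ⟨w, h | h⟩
    · exact (CL_sub_E hGH he0 h).1
    · exact (CL_sub_E hGH he0 h).2.1
  refine ⟨hsubF, ?_⟩
  intro a ha b hb c hc
  have hiff := tilde_module hGH (p := e0.1) (q := e0.2)
    (by simpa using he0) (v := c) (by simpa using hc.2) (by simpa using ha)
    (by simpa using hb)
  constructor
  · intro h
    exact ((hiff.1 ⟨hsubF ha, hc.1, h⟩) :
      ((b, c) ∈ EH E VS F_M)).2.2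
  · intro h
    exact ((hiff.2 ⟨hsubF hb, hc.1, h⟩) :
      ((a, c) ∈ EH E VS F_M)).2.2

include hS hs ht hst hVS

lemma tilde_classH_full (hr : CoReach E (tilde (multiplex E VS)) s t)
    {e0 : Set V × Set V} (he0 : e0 ∈ EH E VS F_M) :
    tilde (CL (EH E VS F_M) e0) = F_M := by
  rcases rank1_indec hG hS hs ht hst hVS hpart hblocks hr _
      (tilde_classH_partitiveGen hG hpart hblocks he0) with h | h
  · exfalso
    have h1 : e0.1 ∈ tilde (CL (EH E VS F_M) e0) :=
      ⟨e0.2, Or.inl (by exact ReflTransGen.refl)⟩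
    have h2 : e0.2 ∈ tilde (CL (EH E VS F_M) e0) :=
      ⟨e0.1, Or.inr (by exact ReflTransGen.refl)⟩
    exact he0.2.2.1 (h h1 h2)
  · exact h

/-- every edge of the quotient lies in the color class of `(Bs, Bt)`. -/
lemma quot_single_class (hr : CoReach E (tilde (multiplex E VS)) s t)
    {Xs Xt : Set V} (hXs : Xs ∈ F_M) (hXt : Xt ∈ F_M)
    (hsXs : s ∈ Xs) (htXt : t ∈ Xt)
    {U Vb : Set V} (hUV : (U, Vb) ∈ EH E VS F_M) :
    (U, Vb) ∈ hat (CL (EH E VS F_M) (Xs, Xt)) := by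
  have hGH := EH_isGraph hG (VS := VS) (F_M := F_M)
  by_contra hnot
  have hAHE : (Xs, Xt) ∈ EH E VS F_M := by
    have hXsXt : Xs ≠ Xt := by
      rintro rfl
      exact hatA_crosses hG hS hs ht hst hVS hpart hblocks
        (Or.inl ReflTransGen.refl) hXs hsXs htXt
    exact ⟨hXs, hXt, hXsXt, s, hsXs, t, htXt, vs_edge hS hs ht hst,
      vs_sub_W hG hS hs ht hst, vs_sub_W hG hS ht hs hst.symm⟩
  have htildeAH : tilde (CL (EH E VS F_M) (Xs, Xt)) = F_M :=
    tilde_classH_full hG hS hs ht hst hVS hpart hblocks hr hAHE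
  -- U has an A_H-edge
  have hUt : U ∈ tilde (CL (EH E VS F_M) (Xs, Xt)) := by
    rw [htildeAH]; exact hUV.1
  obtain ⟨R, hR⟩ := hUt
  have hUR : (U, R) ∈ hat (CL (EH E VS F_M) (Xs, Xt)) := by
    rcases hR with h | h
    · exact Or.inl h
    · exact Or.inr h
  have hURE : (U, R) ∈ EH E VS F_M := hat_CL_sub_E hGH hAHE hUR
  have hRV : (R, Vb) ∈ EH E VS F_M := by
    by_contra hna
    exact hnot (hat_step_right hGH hAHE hUR hna hUV)
  have hatRU : hat (CL (EH E VS F_M) (R, U)) =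
      hat (CL (EH E VS F_M) (Xs, Xt)) := by
    rw [hat_CL_comm hGH]
    exact hat_hat_eq hGH hAHE hUR
  have hBne : hat (CL (EH E VS F_M) (U, Vb)) ≠
      hat (CL (EH E VS F_M) (Xs, Xt)) := by
    intro h
    exact hnot (h ▸ (Or.inl ReflTransGen.refl :
      (U, Vb) ∈ hat (CL (EH E VS F_M) (U, Vb))))
  by_cases hC : hat (CL (EH E VS F_M) (R, Vb)) = hat (CL (EH E VS F_M) (U, Vb))
  · -- sweep the class of (U, R) with apex Vb
    have htr := triangle hGH (a := Vb) (b0 := U) (c0 := R) hURE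
      ((hGH.2 _ _).1 hUV) ((hGH.2 _ _).1 hRV)
      (by
        intro h
        have h1 : hat (CL (EH E VS F_M) (U, Vb)) =
            hat (CL (EH E VS F_M) (Vb, U)) := hat_CL_comm hGH
        have h2 : hat (CL (EH E VS F_M) (U, R)) =
            hat (CL (EH E VS F_M) (R, U)) := hat_CL_comm hGH
        exact hBne (h1.trans ((h.symm.trans h2).trans hatRU)))
      (by
        intro h
        have h2 : hat (CL (EH E VS F_M) (U, R)) =
            hat (CL (EH E VS F_M) (R, U)) := hat_CL_comm hGH
        have h3 : hat (CL (EH E VS F_M) (R, Vb)) =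
            hat (CL (EH E VS F_M) (Vb, R)) := hat_CL_comm hGH
        exact hBne ((hC.symm.trans h3).trans ((h.symm.trans h2).trans hatRU)))
    have htUR : tilde (CL (EH E VS F_M) (U, R)) = F_M := by
      have : hat (CL (EH E VS F_M) (U, R)) =
          hat (CL (EH E VS F_M) (Xs, Xt)) := by
        rw [← hatRU, hat_CL_comm hGH]
      rw [tilde_eq_of_hat_eq this, htildeAH]
    have hVbt : Vb ∈ tilde (CL (EH E VS F_M) (U, R)) := by
      rw [htUR]; exact hUV.2.1
    obtain ⟨Z, hZ | hZ⟩ := hVbt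
    · exact hGH.1 Vb (CL_sub_E hGH ((hGH.2 _ _).1 hUV) (htr _ hZ).1)
    · exact hGH.1 Vb (CL_sub_E hGH ((hGH.2 _ _).1 hRV) (htr _ hZ).2)
  · -- sweep the class of (U, Vb) with apex R
    have htr := triangle hGH (a := R) (b0 := U) (c0 := Vb) hUV
      ((hGH.2 _ _).1 hURE) hRV
      (by
        intro h
        apply hBne
        rw [h, hat_CL_comm hGH, ← hatRU, hat_CL_comm hGH])
      (fun h => hC h.symm)
    have htB : tilde (CL (EH E VS F_M) (U, Vb)) = F_M :=
      tilde_classH_full hG hS hs ht hst hVS hpart hblocks hr hUV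
    have hRt : R ∈ tilde (CL (EH E VS F_M) (U, Vb)) := by
      rw [htB]; exact hURE.2.1
    obtain ⟨Z, hZ | hZ⟩ := hRt
    · exact hGH.1 R (CL_sub_E hGH ((hGH.2 _ _).1 hURE) (htr _ hZ).1)
    · exact hGH.1 R (CL_sub_E hGH hRV (htr _ hZ).2)

/-- in case 2 there are at least three blocks. -/
lemma blocks_ge3 (hr : CoReach E (tilde (multiplex E VS)) s t)
    {Xs Xt : Set V} (hXs : Xs ∈ F_M) (hXt : Xt ∈ F_M)
    (hsXs : s ∈ Xs) (htXt : t ∈ Xt) :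
    ∃ X ∈ F_M, X ≠ Xs ∧ X ≠ Xt := by
  set W := tilde (multiplex E VS) with hWdef
  have hXsXt : Xs ≠ Xt := by
    rintro rfl
    exact hatA_crosses hG hS hs ht hst hVS hpart hblocks
      (Or.inl ReflTransGen.refl) hXs hsXs htXt
  by_contra hc
  push_neg at hc
  have hadj : quotAdj E W Xs Xt :=
    ⟨hXsXt, s, hsXs, t, htXt, vs_edge hS hs ht hst,
      vs_sub_W hG hS hs ht hst, vs_sub_W hG hS ht hs hst.symm⟩
  have key : ∀ z, CoReach E W s z → z ∈ Xs := by
    intro z hz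
    induction hz with
    | refl => exact hsXs
    | @tail z z' hz hstep ih =>
        have hz'W : z' ∈ W := hstep.2.1
        obtain ⟨X, hX, hz'X⟩ : ∃ X ∈ F_M, z' ∈ X := by
          have : z' ∈ ⋃₀ F_M := by rw [hpart.2.1]; exact hz'W
          exact this
        rcases eq_or_ne X Xs with rfl | hne
        · exact hz'X
        · exfalso
          have hXXt : X = Xt := hc X hX hne
          subst hXXt
          have := cross_uniform hG hpart hblocks hXs hXt hXsXt hsXs htXt
            (vs_edge hS hs ht hst) ih hz'X
          exact hstep.2.2 this
  have := key t hr
  exact blocks_disjoint hG hpart hblocks hXs hXt hXsXt this htXt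

end Case2Quot

end TransOrient
namespace TransOrient

set_option linter.unusedSectionVars false
set_option maxHeartbeats 1000000

open Relation

/-- a "helper" block for the ordered pair `(X, Y)`: a block adjacent to `X`
but not to `Y`. -/
def QHelper {V : Type*} (E : Set (V × V)) (VS : Set V) (F_M : Set (Set V))
    (X Y : Set V) : Prop :=
  ∃ Z ∈ F_M, Z ≠ X ∧ Z ≠ Y ∧ quotAdj E (tilde (multiplex E VS)) Z X ∧
    ¬ quotAdj E (tilde (multiplex E VS)) Z Y

section Dominated

variable {V : Type*} {E : Set (V × V)} (hG : IsGraph E)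
  {VS : Set V} (hS : IsSimplex E VS)
  {s t : V} (hs : s ∈ VS) (ht : t ∈ VS) (hst : s ≠ t)
  (hVS : VS = {s, t})
  {F_M : Set (Set V)}
  (hpart : IsPartitionOf (tilde (multiplex E VS)) F_M)
  (hblocks : ∀ X ∈ F_M, IsMaxStrongPartitiveIn E (tilde (multiplex E VS)) X)

include hG hS hs ht hst hVS hpart hblocks

lemma exists_undominated (hr : CoReach E (tilde (multiplex E VS)) s t)
    {Xs Xt : Set V} (hXs : Xs ∈ F_M) (hXt : Xt ∈ F_M)
    (hsXs : s ∈ Xs) (htXt : t ∈ Xt) :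
    ∃ U Vb, (U, Vb) ∈ EH E VS F_M ∧ QHelper E VS F_M U Vb ∧
      QHelper E VS F_M Vb U := by
  classical
  set W := tilde (multiplex E VS) with hWdef
  by_contra hcon
  push_neg at hcon
  have hXsXt : Xs ≠ Xt := by
    rintro rfl
    exact hatA_crosses hG hS hs ht hst hVS hpart hblocks
      (Or.inl ReflTransGen.refl) hXs hsXs htXt
  have hadj : quotAdj E W Xs Xt :=
    ⟨hXsXt, s, hsXs, t, htXt, vs_edge hS hs ht hst,
      vs_sub_W hG hS hs ht hst, vs_sub_W hG hS ht hs hst.symm⟩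
  -- produce a dominating pair u ≻ v among {Xs, Xt}
  obtain ⟨u, v, huF, hvF, huv, hadjuv, hdomv, huvs⟩ :
      ∃ u v, u ∈ F_M ∧ v ∈ F_M ∧ u ≠ v ∧ quotAdj E W u v ∧
        ¬ QHelper E VS F_M v u ∧ ({u, v} : Set (Set V)) = {Xs, Xt} := by
    by_cases hH : QHelper E VS F_M Xs Xt
    · have h2 : ¬ QHelper E VS F_M Xt Xs := by
        intro h2
        exact hcon Xs Xt ⟨hXs, hXt, hadj⟩ hH h2
      exact ⟨Xs, Xt, hXs, hXt, hXsXt, hadj, h2, rfl⟩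
    · exact ⟨Xt, Xs, hXt, hXs, hXsXt.symm, quotAdj_symm hG hadj, hH,
        Set.pair_comm Xt Xs⟩
  -- T = u together with its dominated neighbours
  set T : Set (Set V) := {X | X = u ∨ (X ∈ F_M ∧ quotAdj E W u X ∧
    ¬ QHelper E VS F_M X u)} with hTdef
  have hvT : v ∈ T := Or.inr ⟨hvF, hadjuv, hdomv⟩
  have huT : u ∈ T := Or.inl rfl
  have hTF : T ⊆ F_M := by
    rintro X (rfl | ⟨hXF, _⟩)
    · exact huF
    · exact hXF
  have hTpart : IsPartitiveGen F_M (quotAdj E W) T := by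
    refine ⟨hTF, ?_⟩
    have key : ∀ a ∈ T, ∀ c ∈ F_M, c ∉ T →
        (quotAdj E W a c ↔ quotAdj E W u c) := by
      rintro a ha c hcF hcT
      rcases ha with rfl | ⟨haF, hua, hau⟩
      · exact Iff.rfl
      have hane : a ≠ u := by
        rintro rfl
        exact (hua.1) rfl
      have hac : a ≠ c := by
        rintro rfl
        exact hcT (Or.inr ⟨haF, hua, hau⟩)
      have hcu : c ≠ u := by
        rintro rfl
        exact hcT (Or.inl rfl)
      by_cases hucAdj : quotAdj E W u c
      · constructor
        · intro _; exact hucAdj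
        · intro _
          -- c is not in T, so QHelper c u holds, so ¬ QHelper u c
          have hQcu : QHelper E VS F_M c u := by
            by_contra hq
            exact hcT (Or.inr ⟨hcF, hucAdj, hq⟩)
          have hnQuc : ¬ QHelper E VS F_M u c :=
            hcon c u ⟨hcF, huF, quotAdj_symm hG hucAdj⟩ hQcu
          -- hence every neighbour of u other than c is a neighbour of c
          by_contra hnac
          exact hnQuc ⟨a, haF, hane, hac, quotAdj_symm hG hua, hnac⟩
      · constructor
        · intro hacAdj
          exfalso
          exact hau ⟨c, hcF, hac.symm, hcu,
            quotAdj_symm hG hacAdj, fun h => hucAdj (quotAdj_symm hG h)⟩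
        · intro h; exact absurd h hucAdj
    intro a ha b hb c hc
    rw [key a ha c hc.1 hc.2, key b hb c hc.1 hc.2]
  rcases rank1_indec hG hS hs ht hst hVS hpart hblocks hr T hTpart with h | h
  · exact huv (h huT hvT)
  · -- u is adjacent to every other block
    have huniv : ∀ X ∈ F_M, X ≠ u → quotAdj E W u X := by
      intro X hXF hXu
      have : X ∈ T := by rw [h]; exact hXF
      rcases this with rfl | ⟨_, hadj', _⟩
      · exact absurd rfl hXu
      · exact hadj'
    set T' : Set (Set V) := {X | X ∈ F_M ∧ X ≠ u} with hT'def
    have hT'part : IsPartitiveGen F_M (quotAdj E W) T' := by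
      refine ⟨fun X hX => hX.1, ?_⟩
      intro a ha b hb c hc
      have hcu : c = u := by
        by_contra hcu
        exact hc.2 ⟨hc.1, hcu⟩
      subst hcu
      have h1 : quotAdj E W a c := quotAdj_symm hG (huniv a ha.1 ha.2)
      have h2 : quotAdj E W b c := quotAdj_symm hG (huniv b hb.1 hb.2)
      exact ⟨fun _ => h2, fun _ => h1⟩
    rcases rank1_indec hG hS hs ht hst hVS hpart hblocks hr T' hT'part with h' | h'
    · -- need two distinct blocks different from u
      obtain ⟨X1, hX1F, hX1s, hX1t⟩ :=
        blocks_ge3 hG hS hs ht hst hVS hpart hblocks hr hXs hXt hsXs htXt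
      have hX1u : X1 ≠ u := by
        intro heq
        have : u ∈ ({Xs, Xt} : Set (Set V)) := by
          rw [← huvs]; exact Or.inl rfl
        rcases this with h'' | h''
        · exact hX1s (heq.trans h'')
        · exact hX1t (heq.trans h'')
      have hvu : v ≠ u := huv.symm
      have hX1v : X1 ≠ v := by
        intro heq
        have : v ∈ ({Xs, Xt} : Set (Set V)) := by
          rw [← huvs]; exact Or.inr rfl
        rcases this with h'' | h''
        · exact hX1s (heq.trans h'')
        · exact hX1t (heq.trans h'')
      exact hX1v (h' ⟨hX1F, hX1u⟩ ⟨hvF, hvu⟩)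
    · have : u ∈ T' := by rw [h']; exact huF
      exact this.2 rfl

end Dominated

end TransOrient
namespace TransOrient

set_option linter.unusedSectionVars false
set_option maxHeartbeats 1000000

open Relation

section Seed

variable {V : Type*} {E : Set (V × V)} (hG : IsGraph E)
  {VS : Set V} (hS : IsSimplex E VS)
  {s t : V} (hs : s ∈ VS) (ht : t ∈ VS) (hst : s ≠ t)
  (hVS : VS = {s, t})
  {F_M : Set (Set V)}
  (hpart : IsPartitionOf (tilde (multiplex E VS)) F_M)
  (hblocks : ∀ X ∈ F_M, IsMaxStrongPartitiveIn E (tilde (multiplex E VS)) X)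

include hG hS hs ht hst hVS hpart hblocks

omit hs ht hst hVS in
lemma noadj_symm {X Y : Set V} (hX : X ∈ F_M) (hY : Y ∈ F_M) (hne : X ≠ Y)
    (hna : ¬ quotAdj E (tilde (multiplex E VS)) X Y)
    {x y : V} (hx : x ∈ X) (hy : y ∈ Y) : (y, x) ∉ E := by
  intro he
  exact noadj hG hpart hblocks hX hY hne hna hx hy ((hG.2 _ _).1 he)

omit hs ht hst hVS in
lemma adj_all {X Y : Set V} (hX : X ∈ F_M) (hY : Y ∈ F_M)
    (ha : quotAdj E (tilde (multiplex E VS)) X Y)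
    {x y : V} (hx : x ∈ X) (hy : y ∈ Y) : (x, y) ∈ E := by
  obtain ⟨hne, x0, hx0, y0, hy0, he⟩ := ha
  exact cross_uniform hG hpart hblocks hX hY hne hx0 hy0 he.1 hx hy

lemma good_seed {U Vb : Set V} (hUV : (U, Vb) ∈ EH E VS F_M)
    {x0 y0 : V} (hx0 : x0 ∈ U) (hy0 : y0 ∈ Vb)
    (hgood : (x0, y0) ∈ hat (CL E (s, t)))
    (hH1 : QHelper E VS F_M U Vb) (hH2 : QHelper E VS F_M Vb U) :
    ∀ x ∈ U, ∀ y ∈ Vb, (x, y) ∈ hat (CL E (s, t)) := by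
  have hstE : (s, t) ∈ E := vs_edge hS hs ht hst
  obtain ⟨hUF, hVF, hUVadj⟩ := hUV
  obtain ⟨Z0, hZ0F, hZ0U, hZ0V, hZ0adj, hZ0na⟩ := hH1
  obtain ⟨Z1, hZ1F, hZ1V, hZ1U, hZ1adj, hZ1na⟩ := hH2
  obtain ⟨z0, hz0⟩ := hpart.1 Z0 hZ0F
  obtain ⟨z1, hz1⟩ := hpart.1 Z1 hZ1F
  have step1 : (x0, z0) ∈ hat (CL E (s, t)) := by
    refine hat_step_right hG hstE hgood ?_ ?_
    · exact noadj_symm hG hS hpart hblocks hZ0F hVF hZ0V hZ0na hz0 hy0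
    · exact (hG.2 _ _).1 (adj_all hG hS hpart hblocks hZ0F hUF hZ0adj hz0 hx0)
  intro x hx y hy
  have step2 : (x0, y) ∈ hat (CL E (s, t)) := by
    refine hat_step_right hG hstE step1 ?_ ?_
    · exact noadj hG hpart hblocks hZ0F hVF hZ0V hZ0na hz0 hy
    · exact adj_all hG hS hpart hblocks hUF hVF hUVadj hx0 hy
  have step3 : (z1, y) ∈ hat (CL E (s, t)) := by
    refine hat_step_left hG hstE step2 ?_ ?_
    · exact noadj_symm hG hS hpart hblocks hZ1F hUF hZ1U hZ1na hz1 hx0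
    · exact adj_all hG hS hpart hblocks hZ1F hVF hZ1adj hz1 hy
  refine hat_step_left hG hstE step3 ?_ ?_
  · exact noadj hG hpart hblocks hZ1F hUF hZ1U hZ1na hz1 hx
  · exact adj_all hG hS hpart hblocks hUF hVF hUVadj hx hy

/-- existence of a `hat A` cross pair, along the class of a quotient edge. -/
lemma good_pair_prop {X0 Y0 : Set V} (hX0Y0 : (X0, Y0) ∈ EH E VS F_M)
    {x00 y00 : V} (hx00 : x00 ∈ X0) (hy00 : y00 ∈ Y0)
    (hg : (x00, y00) ∈ hat (CL E (s, t))) :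
    ∀ F ∈ CL (EH E VS F_M) (X0, Y0),
      ∃ x ∈ F.1, ∃ y ∈ F.2, (x, y) ∈ hat (CL E (s, t)) := by
  have hGH := EH_isGraph hG (VS := VS) (F_M := F_M)
  have hstE : (s, t) ∈ E := vs_edge hS hs ht hst
  intro F hF
  induction hF with
  | refl => exact ⟨x00, hx00, y00, hy00, hg⟩
  | @tail F G hF hFG ih =>
      obtain ⟨F1, F2⟩ := F
      obtain ⟨G1, G2⟩ := G
      have hFE : (F1, F2) ∈ EH E VS F_M := hFG.1
      have hGE : (G1, G2) ∈ EH E VS F_M := hFG.2.1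
      obtain ⟨x, hx, y, hy, hxy⟩ := ih
      rcases hFG.2.2 with ⟨heq, hne⟩ | ⟨heq, hne⟩
      · simp only at heq hne hx hy ⊢
        subst heq
        rcases eq_or_ne F2 G2 with rfl | hne2
        · exact ⟨x, hx, y, hy, hxy⟩
        · have hnadj : ¬ quotAdj E (tilde (multiplex E VS)) F2 G2 :=
            fun hq => hne ⟨hFE.2.1, hGE.2.1, hq⟩
          obtain ⟨y', hy'⟩ := hpart.1 G2 hGE.2.1
          refine ⟨x, hx, y', hy', hat_step_right hG hstE hxy ?_ ?_⟩
          · exact noadj hG hpart hblocks hFE.2.1 hGE.2.1 hne2 hnadj hy hy'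
          · exact adj_all hG hS hpart hblocks hGE.1 hGE.2.1 hGE.2.2 hx hy'
      · simp only at heq hne hx hy ⊢
        subst heq
        rcases eq_or_ne F1 G1 with rfl | hne1
        · exact ⟨x, hx, y, hy, hxy⟩
        · have hnadj : ¬ quotAdj E (tilde (multiplex E VS)) F1 G1 :=
            fun hq => hne ⟨hFE.1, hGE.1, hq⟩
          obtain ⟨x', hx'⟩ := hpart.1 G1 hGE.1
          refine ⟨x', hx', y, hy, hat_step_left hG hstE hxy ?_ ?_⟩
          · exact noadj hG hpart hblocks hFE.1 hGE.1 hne1 hnadj hx hx'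
          · exact adj_all hG hS hpart hblocks hGE.1 hGE.2.1 hGE.2.2 hx' hy
  
/-- propagation of the all-pairs property along the quotient class. -/
lemma good_prop {X0 Y0 : Set V} (hX0Y0 : (X0, Y0) ∈ EH E VS F_M)
    (hseed : ∀ x ∈ X0, ∀ y ∈ Y0, (x, y) ∈ hat (CL E (s, t))) :
    ∀ F ∈ CL (EH E VS F_M) (X0, Y0),
      ∀ x ∈ F.1, ∀ y ∈ F.2, (x, y) ∈ hat (CL E (s, t)) := by
  have hGH := EH_isGraph hG (VS := VS) (F_M := F_M)
  have hstE : (s, t) ∈ E := vs_edge hS hs ht hst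
  intro F hF
  induction hF with
  | refl => exact hseed
  | @tail F G hF hFG ih =>
      obtain ⟨F1, F2⟩ := F
      obtain ⟨G1, G2⟩ := G
      have hFE : (F1, F2) ∈ EH E VS F_M := hFG.1
      have hGE : (G1, G2) ∈ EH E VS F_M := hFG.2.1
      rcases hFG.2.2 with ⟨heq, hne⟩ | ⟨heq, hne⟩
      · simp only at heq hne ih ⊢
        subst heq
        rcases eq_or_ne F2 G2 with rfl | hne2
        · exact ih
        · have hnadj : ¬ quotAdj E (tilde (multiplex E VS)) F2 G2 :=
            fun hq => hne ⟨hFE.2.1, hGE.2.1, hq⟩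
          obtain ⟨y, hy⟩ := hpart.1 F2 hFE.2.1
          intro x hx y' hy'
          refine hat_step_right hG hstE (ih x hx y hy) ?_ ?_
          · exact noadj hG hpart hblocks hFE.2.1 hGE.2.1 hne2 hnadj hy hy'
          · exact adj_all hG hS hpart hblocks hGE.1 hGE.2.1 hGE.2.2 hx hy'
      · simp only at heq hne ih ⊢
        subst heq
        rcases eq_or_ne F1 G1 with rfl | hne1
        · exact ih
        · have hnadj : ¬ quotAdj E (tilde (multiplex E VS)) F1 G1 :=
            fun hq => hne ⟨hFE.1, hGE.1, hq⟩
          obtain ⟨x, hx⟩ := hpart.1 F1 hFE.1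
          intro x' hx' y hy
          refine hat_step_left hG hstE (ih x hx y hy) ?_ ?_
          · exact noadj hG hpart hblocks hFE.1 hGE.1 hne1 hnadj hx hx'
          · exact adj_all hG hS hpart hblocks hGE.1 hGE.2.1 hGE.2.2 hx' hy

/-- the main R1 lemma: in case 2 every edge joining two distinct blocks lies
in the color class of `(s,t)`. -/
lemma cross_in_hatA (hr : CoReach E (tilde (multiplex E VS)) s t)
    {X Y : Set V} (hX : X ∈ F_M) (hY : Y ∈ F_M) (hne : X ≠ Y)
    {x y : V} (hx : x ∈ X) (hy : y ∈ Y) (he : (x, y) ∈ E) :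
    (x, y) ∈ hat (CL E (s, t)) := by
  classical
  have hGH := EH_isGraph hG (VS := VS) (F_M := F_M)
  set W := tilde (multiplex E VS) with hWdef
  -- blocks of s and t
  obtain ⟨Xs, hXs, hsXs⟩ : ∃ Xs ∈ F_M, s ∈ Xs := by
    have : s ∈ ⋃₀ F_M := by rw [hpart.2.1]; exact vs_sub_W hG hS hs ht hst
    exact this
  obtain ⟨Xt, hXt, htXt⟩ : ∃ Xt ∈ F_M, t ∈ Xt := by
    have : t ∈ ⋃₀ F_M := by rw [hpart.2.1]; exact vs_sub_W hG hS ht hs hst.symm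
    exact this
  have hAHE : (Xs, Xt) ∈ EH E VS F_M := by
    have hXsXt : Xs ≠ Xt := by
      rintro rfl
      exact hatA_crosses hG hS hs ht hst hVS hpart hblocks
        (Or.inl ReflTransGen.refl) hXs hsXs htXt
    exact ⟨hXs, hXt, hXsXt, s, hsXs, t, htXt, vs_edge hS hs ht hst,
      vs_sub_W hG hS hs ht hst, vs_sub_W hG hS ht hs hst.symm⟩
  -- the quotient edge (X, Y) and its membership in the quotient class
  have hXYE : (X, Y) ∈ EH E VS F_M :=
    ⟨hX, hY, hne, x, hx, y, hy, he, (hblocks X hX).1.1.1 hx,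
      (hblocks Y hY).1.1.1 hy⟩
  have hXYhat := quot_single_class hG hS hs ht hst hVS hpart hblocks hr
    hXs hXt hsXs htXt hXYE
  -- an undominated edge provides a totally good pair of blocks
  obtain ⟨U, Vb, hUVE, hH1, hH2⟩ := exists_undominated hG hS hs ht hst hVS
    hpart hblocks hr hXs hXt hsXs htXt
  have hUVhat := quot_single_class hG hS hs ht hst hVS hpart hblocks hr
    hXs hXt hsXs htXt hUVE
  -- a good pair on (U, Vb)
  have hgoodUV : ∃ x0 ∈ U, ∃ y0 ∈ Vb, (x0, y0) ∈ hat (CL E (s, t)) := by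
    rcases hUVhat with h | h
    · exact good_pair_prop hG hS hs ht hst hVS hpart hblocks hAHE hsXs htXt
        (Or.inl ReflTransGen.refl) _ h
    · obtain ⟨y0, hy0, x0, hx0, hg⟩ :=
        good_pair_prop hG hS hs ht hst hVS hpart hblocks hAHE hsXs htXt
          (Or.inl ReflTransGen.refl) _ h
      exact ⟨x0, hx0, y0, hy0, hat_symm hG hg⟩
  obtain ⟨x0, hx0, y0, hy0, hg⟩ := hgoodUV
  have hseed := good_seed hG hS hs ht hst hVS hpart hblocks hUVE hx0 hy0 hg hH1 hH2
  -- translate the class of (Xs, Xt) to the class of (U, Vb)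
  have hhat_eq : hat (CL (EH E VS F_M) (U, Vb)) =
      hat (CL (EH E VS F_M) (Xs, Xt)) := hat_hat_eq hGH hAHE hUVhat
  have hXYhat' : (X, Y) ∈ hat (CL (EH E VS F_M) (U, Vb)) := by
    rw [hhat_eq]; exact hXYhat
  rcases hXYhat' with h | h
  · exact good_prop hG hS hs ht hst hVS hpart hblocks hUVE hseed _ h x hx y hy
  · have hseed' : ∀ y' ∈ Vb, ∀ x' ∈ U, (y', x') ∈ hat (CL E (s, t)) := by
      intro y' hy' x' hx'
      exact hat_symm hG (hseed x' hx' y' hy')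
    have hVUE : (Vb, U) ∈ EH E VS F_M := (hGH.2 _ _).1 hUVE
    exact good_prop hG hS hs ht hst hVS hpart hblocks hVUE hseed' _
      (CL_swap hGH h) x hx y hy
  
end Seed

end TransOrient
namespace TransOrient

set_option linter.unusedSectionVars false
set_option maxHeartbeats 1000000

open Relation

section FinalAssembly

variable {V : Type*} {E : Set (V × V)} (hG : IsGraph E)
  {VS : Set V} (hS : IsSimplex E VS)
  {s t : V} (hs : s ∈ VS) (ht : t ∈ VS) (hst : s ≠ t)
  (hVS : VS = {s, t})
  {F_M : Set (Set V)}
  (hpart : IsPartitionOf (tilde (multiplex E VS)) F_M)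
  (hblocks : ∀ X ∈ F_M, IsMaxStrongPartitiveIn E (tilde (multiplex E VS)) X)

include hG hS hs ht hst hVS hpart hblocks

lemma rank1_case2 (hr : CoReach E (tilde (multiplex E VS)) s t) :
    IndecomposableGen F_M (quotAdj E (tilde (multiplex E VS))) ∧
      ∃ V' : Set V, ∃ E' : Set (V × V),
        IsSubgraphOf E (tilde (multiplex E VS)) V' E' ∧
        E' ⊆ multiplex E VS ∧
        GraphIso F_M (quotAdj E (tilde (multiplex E VS)))
          V' (fun a b : V => (a, b) ∈ E') := by
  classical
  set W := tilde (multiplex E VS) with hWdef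
  refine ⟨rank1_indec hG hS hs ht hst hVS hpart hblocks hr, ?_⟩
  set rep : Set V → V := fun X => if h : X.Nonempty then h.choose else t
    with hrepdef
  have hrep : ∀ X ∈ F_M, rep X ∈ X := by
    intro X hX
    have h : X.Nonempty := hpart.1 X hX
    simp only [hrepdef, dif_pos h]
    exact h.choose_spec
  have hrepW : ∀ X ∈ F_M, rep X ∈ W := by
    intro X hX
    exact (hblocks X hX).1.1.1 (hrep X hX)
  have hinj : ∀ X ∈ F_M, ∀ Y ∈ F_M, rep X = rep Y → X = Y := by
    intro X hX Y hY h
    by_contra hne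
    have h1 := hrep X hX
    rw [h] at h1
    exact blocks_disjoint hG hpart hblocks hY hX (fun hc => hne hc.symm)
      (hrep Y hY) h1
  refine ⟨rep '' F_M, {p | ∃ X ∈ F_M, ∃ Y ∈ F_M,
    quotAdj E W X Y ∧ p = (rep X, rep Y)}, ⟨?_, ?_, ?_, ?_⟩, ?_, ?_⟩
  · rintro v ⟨X, hX, rfl⟩
    exact hrepW X hX
  · rintro p ⟨X, hX, Y, hY, hq, rfl⟩
    exact ⟨adj_all hG hS hpart hblocks hX hY hq (hrep X hX) (hrep Y hY),
      hrepW X hX, hrepW Y hY⟩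
  · rintro p ⟨X, hX, Y, hY, hq, rfl⟩
    exact ⟨⟨X, hX, rfl⟩, ⟨Y, hY, rfl⟩⟩
  · intro a b
    constructor
    · rintro ⟨X, hX, Y, hY, hq, heq⟩
      refine ⟨Y, hY, X, hX, quotAdj_symm hG hq, ?_⟩
      rw [Prod.ext_iff] at heq
      simp only at heq
      rw [heq.1, heq.2]
    · rintro ⟨X, hX, Y, hY, hq, heq⟩
      refine ⟨Y, hY, X, hX, quotAdj_symm hG hq, ?_⟩
      rw [Prod.ext_iff] at heq
      simp only at heq
      rw [heq.1, heq.2]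
  · rintro p ⟨X, hX, Y, hY, hq, rfl⟩
    have he : (rep X, rep Y) ∈ E :=
      adj_all hG hS hpart hblocks hX hY hq (hrep X hX) (hrep Y hY)
    have := cross_in_hatA hG hS hs ht hst hVS hpart hblocks hr hX hY
      hq.1 (hrep X hX) (hrep Y hY) he
    exact (mem_multiplex_iff hG hS).2 ⟨s, hs, t, ht, hst, this⟩
  · refine ⟨rep, ⟨?_, ?_, ?_⟩, ?_⟩
    · intro X hX
      exact ⟨X, hX, rfl⟩
    · intro X hX Y hY h
      exact hinj X hX Y hY h
    · intro v hv
      exact hv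
    · intro X hX Y hY
      constructor
      · intro hq
        exact ⟨X, hX, Y, hY, hq, rfl⟩
      · rintro ⟨X', hX', Y', hY', hq', heq⟩
        rw [Prod.ext_iff] at heq
        simp only at heq
        have e1 : X = X' := hinj X hX X' hX' heq.1
        have e2 : Y = Y' := hinj Y hY Y' hY' heq.2
        rw [e1, e2]
        exact hq'

end FinalAssembly

end TransOrient
open TransOrient in
/-- **(Theorem 4.4 (ii),(iii))** Let `M = M(S)` be a multiplex and `F_M` a
partition of `M̃` into maximal strong partitive sets of `G(M̃)`. If
`rank M = 1`, then `G(M̃)/F_M` is isomorphic to `S`, or is indecomposable and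
isomorphic to a subgraph `(V',E')` of `G(M̃)` with `E' ⊆ M`; if `rank M ≥ 2`,
then `G(M̃)/F_M` is isomorphic to `S`. -/
theorem quotient_of_multiplex_by_max_strong_partition
    {V : Type*} (E : Set (V × V)) (hG : IsGraph E)
    (VS : Set V) (hS : IsSimplex E VS)
    (F_M : Set (Set V))
    (hpart : IsPartitionOf (tilde (multiplex E VS)) F_M)
    (hblocks : ∀ X ∈ F_M, IsMaxStrongPartitiveIn E (tilde (multiplex E VS)) X) :
    (simplexRank VS = 1 →
      (GraphIso F_M (quotAdj E (tilde (multiplex E VS)))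
          VS (fun a b : V => (a, b) ∈ E) ∨
        (IndecomposableGen F_M (quotAdj E (tilde (multiplex E VS))) ∧
          ∃ V' : Set V, ∃ E' : Set (V × V),
            IsSubgraphOf E (tilde (multiplex E VS)) V' E' ∧ E' ⊆ multiplex E VS ∧
            GraphIso F_M (quotAdj E (tilde (multiplex E VS)))
              V' (fun a b : V => (a, b) ∈ E')))) ∧
    (2 ≤ simplexRank VS →
      GraphIso F_M (quotAdj E (tilde (multiplex E VS)))
        VS (fun a b : V => (a, b) ∈ E)) := by
  constructor
  · -- rank 1
    intro h1
    have h2 : VS.ncard = 2 := by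
      have hpos : VS.ncard ≠ 0 := by
        intro h0
        rw [TransOrient.simplexRank, h0] at h1
        simp at h1
      rw [TransOrient.simplexRank] at h1
      omega
    obtain ⟨s, t, hst, hVSeq⟩ := Set.ncard_eq_two.1 h2
    have hs : s ∈ VS := by rw [hVSeq]; exact Or.inl rfl
    have ht : t ∈ VS := by rw [hVSeq]; exact Or.inr rfl
    by_cases hr : TransOrient.CoReach E (tilde (multiplex E VS)) s t
    · exact Or.inr (TransOrient.rank1_case2 hG hS hs ht hst hVSeq hpart hblocks hr)
    · exact Or.inl (TransOrient.rank1_case1 hG hS hs ht hst hVSeq hpart hblocks hr)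
  · -- rank ≥ 2
    intro h2
    have h3 : 3 ≤ VS.ncard := by
      rw [TransOrient.simplexRank] at h2
      omega
    exact TransOrient.rank2_iso hG hS h3 hpart hblocks
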